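/- arXiv:1601.07164 — 5 statements merged into one kernel-verified Lean document; each statement's English description precedes it below -/
import Mathlib

section
/- For the rumor process on K_n, A_n(k+1) ≤ M_n(k) for 1 ≤ k ≤ n-1, and M_n(k) ≤ A_n(k+2) for 1 ≤ k ≤ n-2. -/
open scoped ENNReal Classical

/-- One step of the rumor process: the two endpoints of the chosen edge `e`
share all their informations. -/
noncomputable def updateInfo {V I : Type*} (f : V → Set I) (e : Sym2 V) : V → Set I :=
  fun v => if v ∈ e then ⋃ w ∈ {w | w ∈ e}, f w else f v

/-- Probability of a property under the uniform distribution on a finite type. -/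
noncomputable def unifProb {α : Type*} [Fintype α] (p : α → Prop) : ℝ≥0∞ :=
  ((Finset.univ.filter p).card : ℝ≥0∞) / (Fintype.card α : ℝ≥0∞)

/-- Expectation of a nonnegative function under the uniform distribution on a finite type. -/
noncomputable def unifExp {α : Type*} [Fintype α] (g : α → ℝ≥0∞) : ℝ≥0∞ :=
  (∑ a : α, g a) / (Fintype.card α : ℝ≥0∞)

/-- Probability that, after `t` i.i.d. uniform edge choices from the graph `G`,
the information configuration started from `f` satisfies `p`. -/
noncomputable def stepProb {n : ℕ} (G : SimpleGraph (Fin n)) {I : Type*}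
    (f : Fin n → Set I) (p : (Fin n → Set I) → Prop) (t : ℕ) : ℝ≥0∞ :=
  letI : Fintype G.edgeSet := (Set.toFinite _).fintype
  unifProb (fun σ : Fin t → G.edgeSet =>
    p (((List.ofFn fun i => ((σ i : Sym2 (Fin n)))).foldl updateInfo f)))

/-- Expected hitting time of the (monotone) property `p` for the rumor process on `G`
started from configuration `f`: `E[τ] = ∑_{t ≥ 0} P(τ > t)`. -/
noncomputable def expTime {n : ℕ} (G : SimpleGraph (Fin n)) {I : Type*}
    (f : Fin n → Set I) (p : (Fin n → Set I) → Prop) : ℝ≥0∞ :=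
  ∑' t : ℕ, stepProb G f (fun c => ¬ p c) t

/-- Initial scenario where each of the `n` sites knows a distinct information. -/
def initDistinct (n : ℕ) : Fin n → Set ℕ := fun v => {(v : ℕ)}

/-- Initial scenario with `n-1` informations: information `0` is known by sites `0` and `1`,
and information `v-1` is known by site `v` for `v ≥ 2`. -/
def initDoubled (n : ℕ) : Fin n → Set ℕ := fun v => {((v : ℕ) - 1)}

/-- `Mq n k`: expected time until informations `0,…,k-1` are known by all sites of `K_n`,
starting from the all-distinct configuration. -/
noncomputable def Mq (n k : ℕ) : ℝ≥0∞ :=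
  expTime ⊤ (initDistinct n) (fun f => ∀ v : Fin n, ∀ j < k, j ∈ f v)

/-- `Aq n k`: expected time until the first `k-1` informations are known by all sites of `K_n`,
starting from the configuration with information `0` doubled. -/
noncomputable def Aq (n k : ℕ) : ℝ≥0∞ :=
  expTime ⊤ (initDoubled n) (fun f => ∀ v : Fin n, ∀ j < k - 1, j ∈ f v)

lemma updateInfo_comp_perm {n : ℕ} {I : Type*} (π : Equiv.Perm (Fin n)) (f : Fin n → Set I)
    (e : Sym2 (Fin n)) (v : Fin n) :
    updateInfo f (Sym2.map π e) (π v) = updateInfo (f ∘ π) e v := by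
  unfold updateInfo
  have hmem : π v ∈ Sym2.map π e ↔ v ∈ e := by
    rw [Sym2.mem_map]
    constructor
    · rintro ⟨w, hw, h⟩; rwa [← π.injective h]
    · exact fun h => ⟨v, h, rfl⟩
  by_cases h : v ∈ e
  · rw [if_pos (hmem.mpr h), if_pos h]
    ext x
    simp only [Set.mem_iUnion, Set.mem_setOf_eq]
    constructor
    · rintro ⟨w, hw, hx⟩
      rcases Sym2.mem_map.mp hw with ⟨u, hu, rfl⟩
      exact ⟨u, hu, hx⟩
    · rintro ⟨u, hu, hx⟩
      exact ⟨π u, Sym2.mem_map.mpr ⟨u, hu, rfl⟩, hx⟩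
  · rw [if_neg (fun hc => h (hmem.mp hc)), if_neg h]; rfl

lemma foldl_perm {n : ℕ} {I : Type*} (π : Equiv.Perm (Fin n)) (f : Fin n → Set I)
    (es : List (Sym2 (Fin n))) (v : Fin n) :
    (es.map (Sym2.map π)).foldl updateInfo f (π v) = es.foldl updateInfo (f ∘ π) v := by
  induction es generalizing f with
  | nil => rfl
  | cons e t ih =>
    simp only [List.map_cons, List.foldl_cons]
    rw [ih]
    have : (updateInfo f (Sym2.map ⇑π e)) ∘ ⇑π = updateInfo (f ∘ ⇑π) e :=
      funext (updateInfo_comp_perm π f e)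
    rw [this]

lemma updateInfo_image {n : ℕ} {I J : Type*} (m : I → J) (f : Fin n → Set I)
    (e : Sym2 (Fin n)) (v : Fin n) :
    updateInfo (fun w => m '' f w) e v = m '' updateInfo f e v := by
  unfold updateInfo
  by_cases h : v ∈ e
  · rw [if_pos h, if_pos h]
    simp [Set.image_iUnion]
  · rw [if_neg h, if_neg h]

lemma foldl_image {n : ℕ} {I J : Type*} (m : I → J) (f : Fin n → Set I)
    (es : List (Sym2 (Fin n))) (v : Fin n) :
    es.foldl updateInfo (fun w => m '' f w) v = m '' (es.foldl updateInfo f v) := by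
  induction es generalizing f with
  | nil => rfl
  | cons e t ih =>
    simp only [List.foldl_cons]
    rw [show updateInfo (fun w => m '' f w) e = fun w => m '' updateInfo f e w from
      funext (updateInfo_image m f e), ih]
lemma map_mem_top_edgeSet {n : ℕ} (π : Equiv.Perm (Fin n)) :
    ∀ x ∈ (⊤ : SimpleGraph (Fin n)).edgeSet, Sym2.map π x ∈ (⊤ : SimpleGraph (Fin n)).edgeSet := by
  intro x
  refine Sym2.ind (fun a b hx => ?_) x
  simp only [Sym2.map_pair_eq, SimpleGraph.mem_edgeSet, SimpleGraph.top_adj] at *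
  exact fun hc => hx (π.injective hc)

noncomputable def edgePermEquiv {n : ℕ} (π : Equiv.Perm (Fin n)) :
    (⊤ : SimpleGraph (Fin n)).edgeSet ≃ (⊤ : SimpleGraph (Fin n)).edgeSet where
  toFun e := ⟨Sym2.map π e, map_mem_top_edgeSet π e e.2⟩
  invFun e := ⟨Sym2.map π.symm e, map_mem_top_edgeSet π.symm e e.2⟩
  left_inv e := by
    ext1
    simp [Sym2.map_map]
  right_inv e := by
    ext1
    simp [Sym2.map_map]

lemma stepProb_le {n : ℕ} {I J : Type*} (f : Fin n → Set I) (g : Fin n → Set J)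
    (p : (Fin n → Set I) → Prop) (q : (Fin n → Set J) → Prop)
    (π : Equiv.Perm (Fin n))
    (h : ∀ es : List (Sym2 (Fin n)),
      q ((es.map (Sym2.map π)).foldl updateInfo g) → p (es.foldl updateInfo f))
    (t : ℕ) :
    stepProb ⊤ f (fun c => ¬ p c) t ≤ stepProb ⊤ g (fun c => ¬ q c) t := by
  simp only [stepProb, unifProb]
  apply ENNReal.div_le_div_right
  refine Nat.cast_le.mpr ?_
  apply Finset.card_le_card_of_injOn (fun σ i => edgePermEquiv π (σ i))
  · intro σ hσ
    simp only [Finset.mem_coe, Finset.mem_filter, Finset.mem_univ, true_and] at hσ ⊢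
    intro hq
    apply hσ
    apply h
    have hlist : (List.ofFn fun i => ((σ i : Sym2 (Fin n)))).map (Sym2.map π)
        = List.ofFn (fun i => ((edgePermEquiv π (σ i) : Sym2 (Fin n)))) := by
      rw [List.map_ofFn]; rfl
    rw [hlist]
    exact hq
  · intro a _ b _ hab
    funext i
    exact (edgePermEquiv π).injective (congrFun hab i)

/-- The `m`-th harmonic number. -/
noncomputable def H (m : ℕ) : ℝ := ∑ j ∈ Finset.range m, (1 : ℝ) / (j + 1)

theorem interlacing_A_M (n k : ℕ) :
    (1 ≤ k → k ≤ n - 1 → Aq n (k + 1) ≤ Mq n k) ∧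
    (1 ≤ k → k ≤ n - 2 → Mq n k ≤ Aq n (k + 2)) := by
  constructor
  · intro hk1 hkn
    have hn : 2 ≤ n := by omega
    haveI : NeZero n := ⟨by omega⟩
    set π : Equiv.Perm (Fin n) := Equiv.subRight (1 : Fin n) with hπ
    set m : ℕ → ℕ :=
      fun a => if h : a < n then (((⟨a, h⟩ : Fin n) - 1 : Fin n) : ℕ) else a with hm
    have h1 : ((1 : Fin n) : ℕ) = 1 := by
      rw [Fin.val_one']; exact Nat.mod_eq_of_lt (by omega)
    have hdoub : initDoubled n = fun w => (fun x => x - 1) '' initDistinct n w := by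
      funext w
      simp [initDoubled, initDistinct]
    have hcomp : (initDistinct n ∘ ⇑π) = fun w => m '' initDistinct n w := by
      funext w
      simp only [Function.comp_apply, initDistinct, Set.image_singleton]
      congr 1
      rw [hm]
      simp only [dif_pos w.isLt, Fin.eta, hπ, Equiv.subRight_apply]
    unfold Aq Mq expTime
    refine ENNReal.tsum_le_tsum fun t => ?_
    refine stepProb_le _ _ _ _ π ?_ t
    intro es hq v j hj
    have hjk : j < k := by omega
    rw [hdoub, foldl_image]
    have hq' := hq (π v) j hjk
    rw [foldl_perm, hcomp, foldl_image] at hq'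
    obtain ⟨a, ha, hma⟩ := hq'
    have hma' : m a = j := hma
    have han : a < n := by
      by_contra hc
      rw [hm] at hma'
      simp only [dif_neg hc] at hma'
      omega
    rw [hm] at hma'
    simp only [dif_pos han, Fin.sub_def, h1] at hma'
    refine ⟨a, ha, ?_⟩
    show a - 1 = j
    rcases Nat.eq_zero_or_pos a with rfl | hpos
    · rw [Nat.add_zero, Nat.mod_eq_of_lt (by omega)] at hma'
      omega
    · have he : n - 1 + a = (a - 1) + n := by omega
      rw [he, Nat.add_mod_right, Nat.mod_eq_of_lt (by omega)] at hma'
      exact hma'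
  · intro hk1 hkn
    have hn : 3 ≤ n := by omega
    haveI : NeZero n := ⟨by omega⟩
    set π : Equiv.Perm (Fin n) := Equiv.addRight (2 : Fin n) with hπ
    set m : ℕ → ℕ :=
      fun a => if h : a < n then (((⟨a, h⟩ : Fin n) + 2 : Fin n) : ℕ) else a with hm
    have h2 : ((2 : Fin n) : ℕ) = 2 := by
      have : ((2 : Fin n) : ℕ) = 2 % n := rfl
      rw [this]; exact Nat.mod_eq_of_lt (by omega)
    have hdoub : initDoubled n = fun w => (fun x => x - 1) '' initDistinct n w := by
      funext w
      simp [initDoubled, initDistinct]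
    have hcomp : (initDistinct n ∘ ⇑π) = fun w => m '' initDistinct n w := by
      funext w
      simp only [Function.comp_apply, initDistinct, Set.image_singleton]
      congr 1
      rw [hm]
      simp only [dif_pos w.isLt, Fin.eta, hπ, Equiv.coe_addRight]
    unfold Aq Mq expTime
    refine ENNReal.tsum_le_tsum fun t => ?_
    refine stepProb_le _ _ _ _ π ?_ t
    intro es hq v j hj
    have hq' := hq (π v) (j + 1) (by omega)
    rw [hdoub, foldl_image, foldl_perm, hcomp, foldl_image] at hq'
    obtain ⟨b, ⟨a, ha, rfl⟩, hb⟩ := hq'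
    have hb' : m a - 1 = j + 1 := hb
    have han : a < n := by
      by_contra hc
      rw [hm] at hb'
      simp only [dif_neg hc] at hb'
      omega
    rw [hm] at hb'
    simp only [dif_pos han, Fin.add_def, h2] at hb'
    have haj : a = j := by
      rcases Nat.lt_or_ge (a + 2) n with h | h
      · rw [Nat.mod_eq_of_lt h] at hb'; omega
      · have h' : (a + 2) % n = a + 2 - n := by
          rw [Nat.mod_eq_sub_mod h, Nat.mod_eq_of_lt (by omega)]
        rw [h'] at hb'; omega
    rwa [haj] at ha
end

section
/- In the rumor process on any finite connected graph G = (V,E) starting with each site knowing a distinct information, the time Y_k until site x_k knows all |V| informations has the same distribution as the time τ_k until information k (initially known only by x_k) is known by all sites. -/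
open scoped ENNReal Classical

section Aux
variable {n : ℕ}

def step2 (e : Sym2 (Fin n)) (a b : Fin n) : Prop := (a ∈ e ∧ b ∈ e) ∨ a = b

def chain : List (Sym2 (Fin n)) → Fin n → Fin n → Prop
  | [], a, b => a = b
  | e :: l, a, b => ∃ u, step2 e a u ∧ chain l u b

lemma mem_updateInfo {f : Fin n → Set (Fin n)} {e : Sym2 (Fin n)} {x w : Fin n} :
    x ∈ updateInfo f e w ↔ ∃ u, x ∈ f u ∧ step2 e u w := by
  unfold updateInfo step2
  by_cases hw : w ∈ e <;>
    [skip; skip] <;>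
    first
      | (rw [if_pos hw]; simp only [Set.mem_iUnion, Set.mem_setOf_eq])
      | (rw [if_neg hw])
  · constructor
    · rintro ⟨u, hu, hx⟩; exact ⟨u, hx, Or.inl ⟨hu, hw⟩⟩
    · rintro ⟨u, hx, h | rfl⟩
      · exact ⟨u, h.1, hx⟩
      · exact ⟨u, hw, hx⟩
  · constructor
    · intro h; exact ⟨w, h, Or.inr rfl⟩
    · rintro ⟨u, hx, h | rfl⟩
      · exact absurd h.2 hw
      · exact hx

lemma mem_foldl (l : List (Sym2 (Fin n))) (f : Fin n → Set (Fin n)) (x y : Fin n) :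
    x ∈ (l.foldl updateInfo f) y ↔ ∃ w, x ∈ f w ∧ chain l w y := by
  induction l generalizing f with
  | nil => simp [chain]
  | cons e l ih =>
    simp only [List.foldl_cons, ih, chain]
    constructor
    · rintro ⟨w, hw, hc⟩
      obtain ⟨u, hu, hs⟩ := mem_updateInfo.1 hw
      exact ⟨u, hu, w, hs, hc⟩
    · rintro ⟨u, hu, w, hs, hc⟩
      exact ⟨w, mem_updateInfo.2 ⟨u, hu, hs⟩, hc⟩

lemma step2_symm {e : Sym2 (Fin n)} {a b : Fin n} : step2 e a b ↔ step2 e b a := by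
  unfold step2; constructor <;> rintro (⟨h1, h2⟩ | rfl) <;> tauto

lemma chain_append (l : List (Sym2 (Fin n))) (e : Sym2 (Fin n)) (a b : Fin n) :
    chain (l ++ [e]) a b ↔ ∃ u, chain l a u ∧ step2 e u b := by
  induction l generalizing a with
  | nil =>
    simp only [List.nil_append, chain]
    constructor
    · rintro ⟨u, hs, rfl⟩; exact ⟨a, rfl, hs⟩
    · rintro ⟨u, rfl, hs⟩; exact ⟨b, hs, rfl⟩
  | cons e' l ih =>
    simp only [List.cons_append, chain, List.append_eq, ih]
    constructor
    · rintro ⟨u, hs, w, hc, hs'⟩; exact ⟨w, ⟨u, hs, hc⟩, hs'⟩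
    · rintro ⟨w, ⟨u, hs, hc⟩, hs'⟩; exact ⟨u, hs, w, hc, hs'⟩

lemma chain_reverse (l : List (Sym2 (Fin n))) (a b : Fin n) :
    chain l a b ↔ chain l.reverse b a := by
  induction l generalizing a b with
  | nil => simpa [chain] using eq_comm
  | cons e l ih =>
    simp only [chain, List.reverse_cons, chain_append]
    constructor
    · rintro ⟨u, hs, hc⟩; exact ⟨u, (ih u b).1 hc, step2_symm.1 hs⟩
    · rintro ⟨u, hc, hs⟩; exact ⟨u, step2_symm.1 hs, (ih u b).2 hc⟩

lemma ofFn_comp_rev {α : Type*} {t : ℕ} (σ : Fin t → α) :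
    List.ofFn (fun i => σ (Fin.rev i)) = (List.ofFn σ).reverse := by
  apply List.ext_getElem
  · simp
  · intro i h1 h2
    simp only [List.getElem_ofFn, List.getElem_reverse, List.length_ofFn] at *
    congr 1
    ext
    simp [Fin.rev]
    omega

end Aux

section Main
variable {n : ℕ}

lemma run_mem (l : List (Sym2 (Fin n))) (a b : Fin n) :
    a ∈ (l.foldl updateInfo (fun v => ({v} : Set (Fin n)))) b ↔ chain l a b := by
  rw [mem_foldl]
  constructor
  · rintro ⟨w, hw, hc⟩
    rw [Set.mem_singleton_iff] at hw
    subst hw; exact hc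
  · intro h; exact ⟨a, rfl, h⟩

theorem time_reversal_distribution_equality (n : ℕ) (G : SimpleGraph (Fin n))
    (hG : G.Connected) (x : Fin n) :
    ∀ t : ℕ,
      stepProb G (fun v => ({v} : Set (Fin n))) (fun f => f x = Set.univ) t
        = stepProb G (fun v => ({v} : Set (Fin n))) (fun f => ∀ v : Fin n, x ∈ f v) t := by
  intro t
  unfold stepProb unifProb
  congr 2
  apply Finset.card_bij' (fun σ _ => σ ∘ Fin.rev) (fun σ _ => σ ∘ Fin.rev)
  · intro σ hσ
    simp only [Finset.mem_filter, Finset.mem_univ, true_and] at hσ ⊢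
    intro v
    have hL : (List.ofFn fun i => (((σ ∘ Fin.rev) i : G.edgeSet) : Sym2 (Fin n)))
        = (List.ofFn fun i => ((σ i : G.edgeSet) : Sym2 (Fin n))).reverse := by
      simpa [Function.comp] using
        ofFn_comp_rev (fun i => ((σ i : G.edgeSet) : Sym2 (Fin n)))
    rw [hL, run_mem, ← chain_reverse]
    rw [Set.eq_univ_iff_forall] at hσ
    have := hσ v
    rwa [run_mem] at this
  · intro σ hσ
    simp only [Finset.mem_filter, Finset.mem_univ, true_and] at hσ ⊢
    have hL : (List.ofFn fun i => (((σ ∘ Fin.rev) i : G.edgeSet) : Sym2 (Fin n)))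
        = (List.ofFn fun i => ((σ i : G.edgeSet) : Sym2 (Fin n))).reverse := by
      simpa [Function.comp] using
        ofFn_comp_rev (fun i => ((σ i : G.edgeSet) : Sym2 (Fin n)))
    rw [hL, Set.eq_univ_iff_forall]
    intro v
    rw [run_mem, chain_reverse, List.reverse_reverse]
    have := hσ v
    rwa [run_mem] at this
  · intro σ _; funext i; simp [Function.comp, Fin.rev_rev]
  · intro σ _; funext i; simp [Function.comp, Fin.rev_rev]

end Main
end

section
/- For the rumor process on any finite connected graph G = (V,E) with each site initially knowing a distinct information, the expected total propagation time satisfies E[τ_V] ≤ 2·E[τ_x] for every site x in V. -/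
open scoped ENNReal Classical

set_option linter.unusedSectionVars false
namespace RumorAux

variable {n : ℕ}

lemma mem_updateInfo {V I : Type*} {f : V → Set I} {e : Sym2 V} {v : V} {z : I} :
    z ∈ updateInfo f e v ↔ (v ∈ e ∧ ∃ w ∈ e, z ∈ f w) ∨ (v ∉ e ∧ z ∈ f v) := by
  unfold updateInfo
  by_cases h : v ∈ e <;> simp [h]

/-- spread sets from singletons -/
noncomputable def rS (l : List (Sym2 (Fin n))) : Fin n → Set (Fin n) :=
  l.foldl updateInfo (fun v => {v})

lemma rS_nil (v : Fin n) : rS ([] : List (Sym2 (Fin n))) v = {v} := rfl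

lemma foldl_biUnion (l : List (Sym2 (Fin n))) :
    ∀ {I : Type} (g : Fin n → Set I) (v : Fin n),
    (l.foldl updateInfo g) v = ⋃ w ∈ rS l v, g w := by
  induction l with
  | nil => intro I g v; simp [rS]
  | cons e l ih =>
      intro I g v
      have h1 : ((e :: l).foldl updateInfo g) v = (l.foldl updateInfo (updateInfo g e)) v := rfl
      have h2 : rS (e :: l) v = ⋃ w ∈ rS l v, updateInfo (fun u => ({u} : Set (Fin n))) e w := by
        have h0 : rS (e :: l) v = (l.foldl updateInfo (updateInfo (fun u => ({u} : Set (Fin n))) e)) v := rfl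
        rw [h0, ih]
      rw [h1, ih, h2]
      ext z
      simp only [Set.mem_iUnion, exists_prop]
      constructor
      · rintro ⟨w, hw, hz⟩
        rw [mem_updateInfo] at hz
        rcases hz with ⟨hwe, u, hue, hzu⟩ | ⟨hwe, hzw⟩
        · exact ⟨u, ⟨w, hw, mem_updateInfo.2 (Or.inl ⟨hwe, u, hue, rfl⟩)⟩, hzu⟩
        · exact ⟨w, ⟨w, hw, mem_updateInfo.2 (Or.inr ⟨hwe, rfl⟩)⟩, hzw⟩
      · rintro ⟨u, ⟨w, hw, hu⟩, hz⟩
        rw [mem_updateInfo] at hu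
        rcases hu with ⟨hwe, u1, hue, h⟩ | ⟨hwe, h⟩
        · simp only [Set.mem_singleton_iff] at h
          exact ⟨w, hw, mem_updateInfo.2 (Or.inl ⟨hwe, u1, hue, h ▸ hz⟩)⟩
        · simp only [Set.mem_singleton_iff] at h
          exact ⟨w, hw, mem_updateInfo.2 (Or.inr ⟨hwe, h ▸ hz⟩)⟩

lemma mem_rS_cons {e : Sym2 (Fin n)} {l : List (Sym2 (Fin n))} {v y : Fin n} :
    y ∈ rS (e :: l) v ↔ ∃ w, w ∈ rS l v ∧ ((w ∈ e ∧ y ∈ e) ∨ (w ∉ e ∧ y = w)) := by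
  have h2 : rS (e :: l) v = ⋃ w ∈ rS l v, updateInfo (fun u => ({u} : Set (Fin n))) e w := by
    have h0 : rS (e :: l) v = (l.foldl updateInfo (updateInfo (fun u => ({u} : Set (Fin n))) e)) v := rfl
    rw [h0, foldl_biUnion]
  rw [h2]
  simp only [Set.mem_iUnion, exists_prop]
  constructor
  · rintro ⟨w, hw, hy⟩
    rw [mem_updateInfo] at hy
    rcases hy with ⟨hwe, u, hue, hy⟩ | ⟨hwe, hy⟩
    · simp only [Set.mem_singleton_iff] at hy; subst hy
      exact ⟨w, hw, Or.inl ⟨hwe, hue⟩⟩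
    · simp only [Set.mem_singleton_iff] at hy
      exact ⟨w, hw, Or.inr ⟨hwe, hy⟩⟩
  · rintro ⟨w, hw, ⟨hwe, hye⟩ | ⟨hwe, hy⟩⟩
    · exact ⟨w, hw, mem_updateInfo.2 (Or.inl ⟨hwe, y, hye, rfl⟩)⟩
    · exact ⟨w, hw, mem_updateInfo.2 (Or.inr ⟨hwe, by simp [hy]⟩)⟩

lemma mem_rS_reverse (l : List (Sym2 (Fin n))) (v y : Fin n) :
    y ∈ rS l v ↔ v ∈ rS l.reverse y := by
  induction l generalizing v y with
  | nil => simp [rS_nil, eq_comm]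
  | cons e l ih =>
      rw [mem_rS_cons]
      have hrev : (e :: l).reverse = l.reverse ++ [e] := by simp
      have h3 : rS (l.reverse ++ [e]) y = updateInfo (rS l.reverse) e y := by
        unfold rS; rw [List.foldl_append]; rfl
      rw [hrev, h3, mem_updateInfo]
      constructor
      · rintro ⟨w, hw, ⟨hwe, hye⟩ | ⟨hwe, rfl⟩⟩
        · exact Or.inl ⟨hye, w, hwe, (ih v w).1 hw⟩
        · by_cases hy : y ∈ e
          · exact Or.inl ⟨hy, y, hy, (ih v y).1 hw⟩
          · exact Or.inr ⟨hy, (ih v y).1 hw⟩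
      · rintro (⟨hye, w, hwe, hvw⟩ | ⟨hye, hvy⟩)
        · exact ⟨w, (ih v w).2 hvw, Or.inl ⟨hwe, hye⟩⟩
        · exact ⟨y, (ih v y).2 hvy, Or.inr ⟨hye, rfl⟩⟩

lemma self_mem_rS (l : List (Sym2 (Fin n))) (v : Fin n) : v ∈ rS l v := by
  suffices h : ∀ (l : List (Sym2 (Fin n))) (g : Fin n → Set (Fin n)), v ∈ g v → v ∈ (l.foldl updateInfo g) v by
    exact h l _ rfl
  intro l
  induction l with
  | nil => intro g h; exact h
  | cons e l ih =>
      intro g h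
      refine ih _ ?_
      rw [mem_updateInfo]
      by_cases he : v ∈ e
      · exact Or.inl ⟨he, v, he, h⟩
      · exact Or.inr ⟨he, h⟩

lemma rS_append (l l' : List (Sym2 (Fin n))) (v : Fin n) :
    rS (l ++ l') v = ⋃ w ∈ rS l' v, rS l w := by
  unfold rS
  rw [List.foldl_append]
  exact foldl_biUnion l' _ v



lemma mem_filter_of {α : Type*} {p : α → Prop} {inst : DecidablePred p} {s : Finset α} {a : α}
    (h1 : a ∈ s) (h2 : p a) : a ∈ @Finset.filter α p inst s := by
  rw [Finset.mem_filter]; exact ⟨h1, h2⟩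

lemma prop_of_mem_filter {α : Type*} {p : α → Prop} {inst : DecidablePred p} {s : Finset α} {a : α}
    (h : a ∈ @Finset.filter α p inst s) : p a := (Finset.mem_filter.1 h).2

noncomputable def cnt {α : Type*} [Fintype α] (p : α → Prop) : ℕ :=
  (Finset.univ.filter p).card

lemma cnt_le_card {α : Type*} [Fintype α] (p : α → Prop) : cnt p ≤ Fintype.card α :=
  Finset.card_filter_le _ _

lemma cnt_mono {α : Type*} [Fintype α] {p q : α → Prop} (h : ∀ a, p a → q a) :
    cnt p ≤ cnt q := by
  refine Finset.card_le_card (fun a ha => ?_)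
  have h2 := prop_of_mem_filter ha
  exact mem_filter_of (Finset.mem_univ a) (h a h2)

lemma cnt_congr {α : Type*} [Fintype α] {p q : α → Prop} (h : ∀ a, p a ↔ q a) :
    cnt p = cnt q :=
  le_antisymm (cnt_mono fun a => (h a).1) (cnt_mono fun a => (h a).2)

lemma cnt_true {α : Type*} [Fintype α] : cnt (fun _ : α => True) = Fintype.card α := by
  refine le_antisymm (cnt_le_card _) ?_
  rw [← Finset.card_univ]
  exact Finset.card_le_card (fun a _ => mem_filter_of (Finset.mem_univ a) trivial)

lemma cnt_comp_equiv {α β : Type*} [Fintype α] [Fintype β] (e : α ≃ β) (p : β → Prop) :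
    cnt (fun a => p (e a)) = cnt p := by
  unfold cnt
  apply Finset.card_bij (fun a _ => e a)
  · intro a ha
    have h2 := prop_of_mem_filter ha
    exact mem_filter_of (Finset.mem_univ _) h2
  · intro a1 _ a2 _ h
    exact e.injective h
  · intro b hb
    refine ⟨e.symm b, mem_filter_of (Finset.mem_univ _) ?_, e.apply_symm_apply b⟩
    have h := prop_of_mem_filter hb
    simpa using h

lemma cnt_or_le {α : Type*} [Fintype α] (p q : α → Prop) :
    cnt (fun a => p a ∨ q a) ≤ cnt p + cnt q := by
  refine le_trans (Finset.card_le_card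
    (t := Finset.univ.filter p ∪ Finset.univ.filter q) (fun a ha => ?_))
    (Finset.card_union_le _ _)
  have hor := prop_of_mem_filter ha
  rcases hor with h2 | h2
  · exact Finset.mem_union_left _ (mem_filter_of (Finset.mem_univ a) h2)
  · exact Finset.mem_union_right _ (mem_filter_of (Finset.mem_univ a) h2)

lemma cnt_exists_le {α : Type*} [Fintype α] (k : ℕ) (p : ℕ → α → Prop) :
    cnt (fun a => ∃ s, s ∈ Finset.range k ∧ p s a) ≤ ∑ s ∈ Finset.range k, cnt (p s) := by
  refine le_trans (Finset.card_le_card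
    (t := (Finset.range k).biUnion (fun s => Finset.univ.filter (p s))) (fun a ha => ?_))
    Finset.card_biUnion_le
  have hex := prop_of_mem_filter ha
  obtain ⟨s, hs, hp⟩ := hex
  exact Finset.mem_biUnion.2 ⟨s, hs, mem_filter_of (Finset.mem_univ _) hp⟩

lemma sum_cnt_disjoint_le {α : Type*} [Fintype α] (k : ℕ) (p : ℕ → α → Prop)
    (hdisj : ∀ s t, s < k → t < k → s ≠ t → ∀ a, p s a → p t a → False) :
    ∑ s ∈ Finset.range k, cnt (p s) ≤ Fintype.card α := by
  have hd : ∀ s ∈ Finset.range k, ∀ t ∈ Finset.range k, s ≠ t →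
      Disjoint (Finset.univ.filter (p s)) (Finset.univ.filter (p t)) := by
    intro s hs t ht hst
    apply Finset.disjoint_left.2
    intro a ha ha'
    exact hdisj s t (Finset.mem_range.1 hs) (Finset.mem_range.1 ht) hst a
      (prop_of_mem_filter ha) (prop_of_mem_filter ha')
  calc ∑ s ∈ Finset.range k, cnt (p s)
      = ((Finset.range k).biUnion fun s => Finset.univ.filter (p s)).card :=
        (Finset.card_biUnion hd).symm
    _ ≤ Finset.univ.card := Finset.card_le_card (fun a _ => Finset.mem_univ a)
    _ = Fintype.card α := Finset.card_univ

/-- splitting a product count -/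
lemma cnt_prod {α : Type*} [Fintype α] (s t : ℕ)
    (P : (Fin s → α) → Prop) (Q : (Fin t → α) → Prop) :
    cnt (fun σ : Fin (s + t) → α =>
      P (fun i => σ (Fin.castAdd t i)) ∧ Q (fun j => σ (Fin.natAdd s j)))
      = cnt P * cnt Q := by
  unfold cnt
  rw [← Finset.card_product]
  apply Finset.card_bij
    (fun σ _ => ((fun i => σ (Fin.castAdd t i)), (fun j => σ (Fin.natAdd s j))))
  · intro σ hσ
    have hpq := prop_of_mem_filter hσ
    obtain ⟨h1, h2⟩ := hpq
    exact Finset.mem_product.2 ⟨mem_filter_of (Finset.mem_univ _) h1,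
      mem_filter_of (Finset.mem_univ _) h2⟩
  · intro σ1 _ σ2 _ heq
    funext i
    refine Fin.addCases (fun i0 => ?_) (fun j0 => ?_) i
    · exact congrFun (congrArg Prod.fst heq) i0
    · exact congrFun (congrArg Prod.snd heq) j0
  · rintro ⟨τ, ρ⟩ hmem
    rcases Finset.mem_product.1 hmem with ⟨hτ, hρ⟩
    have hτ2 : (fun i => Fin.append τ ρ (Fin.castAdd t i)) = τ :=
      funext fun i => Fin.append_left _ _ i
    have hρ2 : (fun j => Fin.append τ ρ (Fin.natAdd s j)) = ρ :=
      funext fun j => Fin.append_right _ _ j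
    refine ⟨Fin.append τ ρ, mem_filter_of (Finset.mem_univ _) ⟨?_, ?_⟩, ?_⟩
    · rw [hτ2]; exact prop_of_mem_filter hτ
    · rw [hρ2]; exact prop_of_mem_filter hρ
    · rw [Prod.mk.injEq]; exact ⟨hτ2, hρ2⟩



lemma ofFn_rev {α : Type*} {t : ℕ} (f : Fin t → α) :
    List.ofFn (fun i => f (Fin.rev i)) = (List.ofFn f).reverse := by
  apply List.ext_getElem
  · simp
  · intro i h1 h2
    simp only [List.getElem_ofFn, List.getElem_reverse, List.length_ofFn] at *
    congr 1
    ext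
    simp only [Fin.val_rev]
    omega

lemma ofFn_cast {α : Type*} {a b : ℕ} (h : a = b) (f : Fin b → α) :
    List.ofFn (fun i : Fin a => f (Fin.cast h i)) = List.ofFn f := by
  subst h; rfl


section Problem

variable {n : ℕ} {G : SimpleGraph (Fin n)}

/-- edge word of a sequence of edge choices -/
def Lw {t : ℕ} (σ : Fin t → G.edgeSet) : List (Sym2 (Fin n)) :=
  List.ofFn fun i => ((σ i : Sym2 (Fin n)))

def allUniv {t : ℕ} (σ : Fin t → G.edgeSet) : Prop := ∀ v, rS (Lw σ) v = Set.univ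

def knowAll (x : Fin n) {t : ℕ} (σ : Fin t → G.edgeSet) : Prop := ∀ y, y ∈ rS (Lw σ) x

def spreadAll (x : Fin n) {t : ℕ} (σ : Fin t → G.edgeSet) : Prop := ∀ v, x ∈ rS (Lw σ) v

def firstKnow (x : Fin n) (s : ℕ) (σ : Fin s → G.edgeSet) : Prop :=
  knowAll x σ ∧ ∀ s' (h : s' < s), ¬ knowAll x (fun i : Fin s' => σ (Fin.castLE h.le i))

lemma Lw_cast {a b : ℕ} (h : a = b) (σ : Fin b → G.edgeSet) :
    Lw (fun i : Fin a => σ (Fin.cast h i)) = Lw σ := by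
  unfold Lw; exact ofFn_cast h (fun i => ((σ i : Sym2 (Fin n))))

lemma knowAll_cast {x : Fin n} {a b : ℕ} (h : a = b) (σ : Fin b → G.edgeSet) :
    knowAll x (fun i : Fin a => σ (Fin.cast h i)) ↔ knowAll x σ := by
  unfold knowAll; rw [Lw_cast]

lemma spreadAll_cast {x : Fin n} {a b : ℕ} (h : a = b) (σ : Fin b → G.edgeSet) :
    spreadAll x (fun i : Fin a => σ (Fin.cast h i)) ↔ spreadAll x σ := by
  unfold spreadAll; rw [Lw_cast]

lemma allUniv_cast {a b : ℕ} (h : a = b) (σ : Fin b → G.edgeSet) :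
    allUniv (fun i : Fin a => σ (Fin.cast h i)) ↔ allUniv σ := by
  unfold allUniv; rw [Lw_cast]

lemma knowAll_iff_spreadAll_rev (x : Fin n) {t : ℕ} (σ : Fin t → G.edgeSet) :
    knowAll x σ ↔ spreadAll x (fun i => σ (Fin.rev i)) := by
  have hL : Lw (fun i => σ (Fin.rev i)) = (Lw σ).reverse := by
    unfold Lw; exact ofFn_rev (fun i => ((σ i : Sym2 (Fin n))))
  unfold knowAll spreadAll
  rw [hL]
  constructor
  · intro h y
    exact (mem_rS_reverse (Lw σ) x y).1 (h y)
  · intro h y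
    exact (mem_rS_reverse (Lw σ) x y).2 (h y)

/-- combining: if `x` has learned everything during the first `s` steps and the
information of `x` spreads to everybody during the last `t` steps, everybody
knows everything. -/
lemma combine (x : Fin n) (s t : ℕ) (σ : Fin (s + t) → G.edgeSet)
    (h1 : knowAll x (fun i => σ (Fin.castAdd t i)))
    (h2 : spreadAll x (fun j => σ (Fin.natAdd s j))) :
    allUniv σ := by
  have hL : Lw σ = Lw (fun i => σ (Fin.castAdd t i)) ++ Lw (fun j => σ (Fin.natAdd s j)) := by
    unfold Lw
    exact List.ofFn_add
  intro v
  rw [hL, rS_append]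
  apply Set.eq_univ_of_univ_subset
  intro z _
  rw [Set.mem_iUnion]
  exact ⟨x, Set.mem_iUnion.2 ⟨h2 v, h1 z⟩⟩

end Problem

section Counting

variable {n : ℕ} {G : SimpleGraph (Fin n)} [Fintype G.edgeSet]

lemma card_fun_fin (t : ℕ) :
    Fintype.card (Fin t → G.edgeSet) = Fintype.card G.edgeSet ^ t := by
  rw [Fintype.card_fun, Fintype.card_fin]

lemma cnt_fun_cast {α : Type*} [Fintype α] {a b : ℕ} (h : a = b)
    (p : (Fin a → α) → Prop) (q : (Fin b → α) → Prop)
    (hpq : ∀ ρ : Fin b → α, p (fun i => ρ (Fin.cast h i)) ↔ q ρ) : cnt p = cnt q := by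
  subst h
  exact cnt_congr fun ρ => hpq ρ

def revEquiv (t : ℕ) (α : Type*) : (Fin t → α) ≃ (Fin t → α) where
  toFun := fun σ => fun i => σ (Fin.rev i)
  invFun := fun σ => fun i => σ (Fin.rev i)
  left_inv := fun σ => funext fun i => congrArg σ (Fin.rev_rev i)
  right_inv := fun σ => funext fun i => congrArg σ (Fin.rev_rev i)

lemma cnt_knowAll_eq_spreadAll (x : Fin n) (t : ℕ) :
    cnt (fun σ : Fin t → G.edgeSet => ¬ knowAll x σ)
      = cnt (fun σ : Fin t → G.edgeSet => ¬ spreadAll x σ) := by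
  rw [← cnt_comp_equiv (revEquiv t G.edgeSet) (fun σ : Fin t → G.edgeSet => ¬ spreadAll x σ)]
  apply cnt_congr
  intro σ
  exact not_congr (knowAll_iff_spreadAll_rev x σ)

/-- the lifted "first time x knows everything is exactly s" event -/
def liftF (x : Fin n) (u s : ℕ) (σ : Fin u → G.edgeSet) : Prop :=
  ∃ hs : s ≤ u, firstKnow x s (fun i => σ (Fin.castLE hs i))

/-- the lifted "x first knows all at s and then spreading fails" event -/
def ev (x : Fin n) (u s : ℕ) (σ : Fin u → G.edgeSet) : Prop :=
  ∃ hs : s ≤ u, firstKnow x s (fun i => σ (Fin.castLE hs i)) ∧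
    ¬ spreadAll x (fun j : Fin (u - s) => σ (⟨s + j.1, by have := j.2; omega⟩ : Fin u))

lemma cnt_ev (x : Fin n) {u s : ℕ} (hs : s ≤ u) :
    cnt (ev x u s (G := G))
      = cnt (firstKnow x s (G := G))
        * cnt (fun ρ : Fin (u - s) → G.edgeSet => ¬ spreadAll x ρ) := by
  obtain ⟨t, rfl⟩ : ∃ t, u = s + t := ⟨u - s, by omega⟩
  have ht : s + t - s = t := by omega
  have h1 : cnt (ev x (s + t) s (G := G))
      = cnt (fun σ : Fin (s + t) → G.edgeSet =>
          firstKnow x s (fun i => σ (Fin.castAdd t i)) ∧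
          ¬ spreadAll x (fun j => σ (Fin.natAdd s j))) := by
    apply cnt_congr
    intro σ
    unfold ev
    constructor
    · rintro ⟨hs', hfk, hsp⟩
      have e1 : (fun i : Fin s => σ (Fin.castLE hs' i)) = fun i => σ (Fin.castAdd t i) :=
        funext fun i => congrArg σ (Fin.ext rfl)
      have e2 : (fun j : Fin (s + t - s) =>
            σ (⟨s + j.1, by have := j.2; omega⟩ : Fin (s + t)))
          = fun j : Fin (s + t - s) => (fun j' : Fin t => σ (Fin.natAdd s j')) (Fin.cast ht j) :=
        funext fun j => congrArg σ (Fin.ext rfl)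
      refine ⟨e1 ▸ hfk, ?_⟩
      intro hsp'
      apply hsp
      rw [e2]
      exact (spreadAll_cast ht _).2 hsp'
    · rintro ⟨hfk, hsp⟩
      refine ⟨by omega, ?_, ?_⟩
      · have e1 : (fun i : Fin s => σ (Fin.castLE (by omega : s ≤ s + t) i))
            = fun i => σ (Fin.castAdd t i) := funext fun i => congrArg σ (Fin.ext rfl)
        rw [e1]; exact hfk
      · have e2 : (fun j : Fin (s + t - s) =>
              σ (⟨s + j.1, by have := j.2; omega⟩ : Fin (s + t)))
            = fun j : Fin (s + t - s) => (fun j' : Fin t => σ (Fin.natAdd s j')) (Fin.cast ht j) :=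
          funext fun j => congrArg σ (Fin.ext rfl)
        rw [e2]
        intro hsp'
        exact hsp ((spreadAll_cast ht _).1 hsp')
  rw [h1, cnt_prod s t (firstKnow x s) (fun ρ => ¬ spreadAll x ρ)]
  congr 1
  exact (cnt_fun_cast (α := G.edgeSet) ht
    (fun ρ : Fin (s + t - s) → G.edgeSet => ¬ spreadAll x ρ)
    (fun ρ : Fin t → G.edgeSet => ¬ spreadAll x ρ)
    (fun ρ => not_congr (spreadAll_cast (G := G) ht ρ))).symm

lemma cnt_liftF (x : Fin n) {u s : ℕ} (hs : s ≤ u) :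
    cnt (liftF x u s (G := G))
      = cnt (firstKnow x s (G := G)) * Fintype.card G.edgeSet ^ (u - s) := by
  obtain ⟨t, rfl⟩ : ∃ t, u = s + t := ⟨u - s, by omega⟩
  have ht : s + t - s = t := by omega
  rw [ht]
  have h1 : cnt (liftF x (s + t) s (G := G))
      = cnt (fun σ : Fin (s + t) → G.edgeSet =>
          firstKnow x s (fun i => σ (Fin.castAdd t i)) ∧ True) := by
    apply cnt_congr
    intro σ
    unfold liftF
    have e1 : ∀ hs' : s ≤ s + t, (fun i : Fin s => σ (Fin.castLE hs' i))
        = fun i => σ (Fin.castAdd t i) := fun hs' => funext fun i => congrArg σ (Fin.ext rfl)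
    constructor
    · rintro ⟨hs', hfk⟩; exact ⟨(e1 hs') ▸ hfk, trivial⟩
    · rintro ⟨hfk, -⟩
      refine ⟨by omega, ?_⟩
      rw [e1]; exact hfk
  rw [h1, cnt_prod s t (firstKnow x s) (fun _ => True), cnt_true, card_fun_fin]

lemma liftF_disjoint (x : Fin n) (u : ℕ) (s s' : ℕ) (hne : s ≠ s')
    (σ : Fin u → G.edgeSet) (h1 : liftF x u s σ) (h2 : liftF x u s' σ) : False := by
  wlog hlt : s < s' generalizing s s'
  · exact this s' s (Ne.symm hne) h2 h1 (by omega)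
  obtain ⟨hs, hfk, -⟩ := h1
  obtain ⟨hs', -, hmin⟩ := h2
  apply hmin s hlt
  have e1 : (fun i : Fin s => (fun i' : Fin s' => σ (Fin.castLE hs' i')) (Fin.castLE hlt.le i))
      = fun i : Fin s => σ (Fin.castLE hs i) := funext fun i => congrArg σ (Fin.ext rfl)
  rw [e1]
  exact hfk

lemma pointwise_decomp (x : Fin n) (u : ℕ) (σ : Fin u → G.edgeSet) (h : ¬ allUniv σ) :
    (¬ knowAll x σ) ∨ ∃ s, s ∈ Finset.range (u + 1) ∧ ev x u s σ := by
  by_cases hk : knowAll x σ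
  · right
    have hPu : ∃ hs : u ≤ u, knowAll x (fun i => σ (Fin.castLE hs i)) := by
      refine ⟨le_rfl, ?_⟩
      have e0 : (fun i : Fin u => σ (Fin.castLE le_rfl i)) = σ :=
        funext fun i => congrArg σ (Fin.ext rfl)
      rw [e0]; exact hk
    have hPex : ∃ s, ∃ hs : s ≤ u, knowAll x (fun i : Fin s => σ (Fin.castLE hs i)) := ⟨u, hPu⟩
    obtain ⟨hsu, hknow⟩ := Nat.find_spec hPex
    refine ⟨Nat.find hPex, Finset.mem_range.2 (by omega), hsu, ⟨hknow, ?_⟩, ?_⟩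
    · intro s' h' hk'
      apply Nat.find_min hPex h'
      refine ⟨by omega, ?_⟩
      have e1 : (fun i : Fin s' => σ (Fin.castLE (by omega : s' ≤ u) i))
          = fun i : Fin s' => (fun i' => σ (Fin.castLE hsu i')) (Fin.castLE h'.le i) :=
        funext fun i => congrArg σ (Fin.ext rfl)
      rw [e1]; exact hk'
    · intro hsp
      apply h
      have ht : u = Nat.find hPex + (u - Nat.find hPex) := by omega
      have hAll : allUniv (fun i : Fin (Nat.find hPex + (u - Nat.find hPex)) =>
          σ (Fin.cast ht.symm i)) := by
        apply combine x
        · have e1 : (fun i : Fin (Nat.find hPex) =>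
              σ (Fin.cast ht.symm (Fin.castAdd (u - Nat.find hPex) i)))
              = fun i => σ (Fin.castLE hsu i) := funext fun i => congrArg σ (Fin.ext rfl)
          show knowAll x (fun i => σ (Fin.cast ht.symm (Fin.castAdd (u - Nat.find hPex) i)))
          rw [e1]; exact hknow
        · have e2 : (fun j : Fin (u - Nat.find hPex) =>
              σ (Fin.cast ht.symm (Fin.natAdd (Nat.find hPex) j)))
              = fun j : Fin (u - Nat.find hPex) =>
                  σ (⟨Nat.find hPex + j.1, by have := j.2; omega⟩ : Fin u) :=
            funext fun j => congrArg σ (Fin.ext rfl)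
          show spreadAll x (fun j => σ (Fin.cast ht.symm (Fin.natAdd (Nat.find hPex) j)))
          rw [e2]; exact hsp
      exact (allUniv_cast ht.symm σ).1 hAll
  · exact Or.inl hk

lemma main_count (x : Fin n) (u : ℕ) :
    cnt (fun σ : Fin u → G.edgeSet => ¬ allUniv σ)
      ≤ cnt (fun σ : Fin u → G.edgeSet => ¬ knowAll x σ)
        + ∑ s ∈ Finset.range (u + 1),
            cnt (firstKnow x s (G := G))
              * cnt (fun ρ : Fin (u - s) → G.edgeSet => ¬ spreadAll x ρ) := by
  calc cnt (fun σ : Fin u → G.edgeSet => ¬ allUniv σ)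
      ≤ cnt (fun σ : Fin u → G.edgeSet =>
          (¬ knowAll x σ) ∨ ∃ s, s ∈ Finset.range (u + 1) ∧ ev x u s σ) :=
        cnt_mono (fun σ h => pointwise_decomp x u σ h)
    _ ≤ cnt (fun σ : Fin u → G.edgeSet => ¬ knowAll x σ)
        + cnt (fun σ : Fin u → G.edgeSet => ∃ s, s ∈ Finset.range (u + 1) ∧ ev x u s σ) :=
        cnt_or_le _ _
    _ ≤ _ := by
        apply add_le_add le_rfl
        refine le_trans (cnt_exists_le _ _) ?_
        apply Finset.sum_le_sum
        intro s hs
        rw [cnt_ev x (by have := Finset.mem_range.1 hs; omega : s ≤ u)]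

lemma sum_liftF_le (x : Fin n) (k : ℕ) :
    ∑ s ∈ Finset.range k,
        cnt (firstKnow x s (G := G)) * Fintype.card G.edgeSet ^ (k - s)
      ≤ Fintype.card G.edgeSet ^ k := by
  have h : ∀ s ∈ Finset.range k,
      cnt (firstKnow x s (G := G)) * Fintype.card G.edgeSet ^ (k - s)
        = cnt (liftF x k s (G := G)) := by
    intro s hs
    rw [cnt_liftF x (by have := Finset.mem_range.1 hs; omega : s ≤ k)]
  rw [Finset.sum_congr rfl h, ← card_fun_fin (G := G) k]
  exact sum_cnt_disjoint_le k _ (fun s t _ _ hne σ h1 h2 => liftF_disjoint x k s t hne σ h1 h2)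

end Counting

end RumorAux

namespace RumorAux

section Analytic

variable {n : ℕ} {G : SimpleGraph (Fin n)} [Fintype G.edgeSet]

lemma stepProb_cnt {I : Type*} (f : Fin n → Set I) (p : (Fin n → Set I) → Prop) (t : ℕ) :
    stepProb G f p t
      = (cnt (fun σ : Fin t → G.edgeSet => p ((Lw σ).foldl updateInfo f)) : ℝ≥0∞)
        / ((Fintype.card G.edgeSet : ℝ≥0∞)) ^ t := by
  have hinst : (Set.toFinite (G.edgeSet : Set (Sym2 (Fin n)))).fintype
      = ‹Fintype G.edgeSet› := Subsingleton.elim _ _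
  unfold stepProb unifProb
  rw [hinst, card_fun_fin, Nat.cast_pow]
  rfl

lemma expTime_cnt {I : Type*} (f : Fin n → Set I) (p : (Fin n → Set I) → Prop) :
    expTime G f p
      = ∑' t : ℕ, (cnt (fun σ : Fin t → G.edgeSet => ¬ p ((Lw σ).foldl updateInfo f)) : ℝ≥0∞)
          / ((Fintype.card G.edgeSet : ℝ≥0∞)) ^ t := by
  unfold expTime
  exact tsum_congr fun t => stepProb_cnt f _ t

lemma sum_div_ennreal (s : Finset ℕ) (f : ℕ → ℝ≥0∞) (a : ℝ≥0∞) :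
    (∑ i ∈ s, f i) / a = ∑ i ∈ s, f i / a := by
  simp [div_eq_mul_inv, Finset.sum_mul]

end Analytic

/-- Cauchy style reindexing in `ℝ≥0∞`. -/
lemma tsum_conv (f g : ℕ → ℝ≥0∞) :
    (∑' u : ℕ, ∑ s ∈ Finset.range (u + 1), f s * g (u - s))
      = (∑' s : ℕ, f s) * (∑' t : ℕ, g t) := by
  have h1 : ∀ u : ℕ, ∑ s ∈ Finset.range (u + 1), f s * g (u - s)
      = ∑' s : ℕ, if s ≤ u then f s * g (u - s) else 0 := by
    intro u
    rw [tsum_eq_sum (s := Finset.range (u + 1)) ?h]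
    · apply Finset.sum_congr rfl
      intro s hs
      rw [if_pos (by have := Finset.mem_range.1 hs; omega)]
    · intro b hb
      rw [if_neg (by simp only [Finset.mem_range] at hb; omega)]
  calc (∑' u : ℕ, ∑ s ∈ Finset.range (u + 1), f s * g (u - s))
      = ∑' u : ℕ, ∑' s : ℕ, if s ≤ u then f s * g (u - s) else 0 := tsum_congr h1
    _ = ∑' s : ℕ, ∑' u : ℕ, if s ≤ u then f s * g (u - s) else 0 := ENNReal.tsum_comm
    _ = ∑' s : ℕ, ∑' t : ℕ, f s * g t := by
        apply tsum_congr
        intro s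
        have hinj : Function.Injective (fun t : ℕ => s + t) := fun a b h =>
          Nat.add_left_cancel h
        have hsupp : Function.support (fun u : ℕ => if s ≤ u then f s * g (u - s) else 0)
            ⊆ Set.range (fun t : ℕ => s + t) := by
          intro u hu
          by_cases h : s ≤ u
          · exact ⟨u - s, by show s + (u - s) = u; omega⟩
          · simp [if_neg h] at hu
        rw [← Function.Injective.tsum_eq hinj hsupp]
        apply tsum_congr
        intro t
        show (if s ≤ s + t then f s * g (s + t - s) else 0) = f s * g t
        rw [if_pos (Nat.le_add_right s t), Nat.add_sub_cancel_left]
    _ = ∑' s : ℕ, f s * ∑' t : ℕ, g t := tsum_congr fun s => ENNReal.tsum_mul_left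
    _ = (∑' s : ℕ, f s) * (∑' t : ℕ, g t) := ENNReal.tsum_mul_right

end RumorAux

theorem total_propagation_at_most_twice_single (n : ℕ) (G : SimpleGraph (Fin n))
    (hG : G.Connected) (x : Fin n) :
    expTime G (fun v => ({v} : Set (Fin n))) (fun f => ∀ v : Fin n, f v = Set.univ)
      ≤ 2 * expTime G (fun v => ({v} : Set (Fin n))) (fun f => ∀ v : Fin n, x ∈ f v) := by
  classical
  letI instE : Fintype G.edgeSet := (Set.toFinite _).fintype
  rw [RumorAux.expTime_cnt, RumorAux.expTime_cnt]
  show (∑' u : ℕ, (RumorAux.cnt (fun σ : Fin u → G.edgeSet => ¬ RumorAux.allUniv σ) : ℝ≥0∞)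
          / (Fintype.card G.edgeSet : ℝ≥0∞) ^ u)
      ≤ 2 * ∑' u : ℕ,
          (RumorAux.cnt (fun σ : Fin u → G.edgeSet => ¬ RumorAux.spreadAll x σ) : ℝ≥0∞)
          / (Fintype.card G.edgeSet : ℝ≥0∞) ^ u
  set m : ℝ≥0∞ := (Fintype.card G.edgeSet : ℝ≥0∞) with hm
  by_cases hn : n ≤ 1
  · -- degenerate case: everybody always knows everything
    have hzero : ∀ u (σ : Fin u → G.edgeSet), RumorAux.allUniv σ := by
      intro u σ v
      apply Set.eq_univ_of_forall
      intro y
      have hy : y = v := by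
        apply Fin.ext
        have h1 := y.2
        have h2 := v.2
        omega
      rw [hy]
      exact RumorAux.self_mem_rS _ v
    have h0 : (∑' u : ℕ,
        (RumorAux.cnt (fun σ : Fin u → G.edgeSet => ¬ RumorAux.allUniv σ) : ℝ≥0∞) / m ^ u) = 0 := by
      rw [ENNReal.tsum_eq_zero]
      intro u
      have hc : RumorAux.cnt (fun σ : Fin u → G.edgeSet => ¬ RumorAux.allUniv σ) = 0 := by
        unfold RumorAux.cnt
        rw [Finset.card_eq_zero]
        apply Finset.eq_empty_of_forall_notMem
        intro σ hσ
        exact (RumorAux.prop_of_mem_filter hσ) (hzero u σ)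
      rw [hc, Nat.cast_zero, ENNReal.zero_div]
    rw [h0]
    exact zero_le
  · -- main case: the graph has at least one edge
    have hcard : 1 ≤ Fintype.card G.edgeSet := by
      have hne : (⟨0, by omega⟩ : Fin n) ≠ ⟨1, by omega⟩ := by
        intro h
        have := congrArg Fin.val h
        simp at this
      obtain ⟨w⟩ := hG.preconnected ⟨0, by omega⟩ ⟨1, by omega⟩
      cases w with
      | @cons _ b _ h p =>
          refine Fintype.card_pos_iff.2 ⟨⟨s((⟨0, by omega⟩ : Fin n), b), ?_⟩⟩
          exact (SimpleGraph.mem_edgeSet G).2 h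
    have hm0 : m ≠ 0 := by
      rw [hm]
      exact Nat.cast_ne_zero.2 (by omega)
    have hmtop : m ≠ ⊤ := by rw [hm]; exact ENNReal.natCast_ne_top _
    have hpow0 : ∀ k : ℕ, m ^ k ≠ 0 := fun k => pow_ne_zero k hm0
    have hpowtop : ∀ k : ℕ, m ^ k ≠ ⊤ := fun k => ENNReal.pow_ne_top hmtop
    have hpowsplit : ∀ {s u : ℕ}, s ≤ u → m ^ u = m ^ s * m ^ (u - s) := by
      intro s u hs
      rw [← pow_add]
      congr 1
      omega
    -- abbreviations
    set F : ℕ → ℝ≥0∞ := fun s => (RumorAux.cnt (RumorAux.firstKnow x s (G := G)) : ℝ≥0∞) with hF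
    set Sp : ℕ → ℝ≥0∞ :=
      fun t => (RumorAux.cnt (fun ρ : Fin t → G.edgeSet => ¬ RumorAux.spreadAll x ρ) : ℝ≥0∞) with hSp
    -- each term of the series for E[τ_V]
    have key : ∀ u : ℕ,
        (RumorAux.cnt (fun σ : Fin u → G.edgeSet => ¬ RumorAux.allUniv σ) : ℝ≥0∞) / m ^ u
          ≤ Sp u / m ^ u
            + ∑ s ∈ Finset.range (u + 1), (F s / m ^ s) * (Sp (u - s) / m ^ (u - s)) := by
      intro u
      have hmain := RumorAux.main_count (G := G) x u
      calc (RumorAux.cnt (fun σ : Fin u → G.edgeSet => ¬ RumorAux.allUniv σ) : ℝ≥0∞) / m ^ u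
          ≤ ((RumorAux.cnt (fun σ : Fin u → G.edgeSet => ¬ RumorAux.knowAll x σ)
              + ∑ s ∈ Finset.range (u + 1),
                  RumorAux.cnt (RumorAux.firstKnow x s (G := G))
                    * RumorAux.cnt (fun ρ : Fin (u - s) → G.edgeSet => ¬ RumorAux.spreadAll x ρ)
                : ℕ) : ℝ≥0∞) / m ^ u :=
            ENNReal.div_le_div_right (by exact_mod_cast hmain) _
        _ = Sp u / m ^ u
            + ∑ s ∈ Finset.range (u + 1), (F s / m ^ s) * (Sp (u - s) / m ^ (u - s)) := by
            rw [Nat.cast_add, ← ENNReal.div_add_div_same]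
            congr 1
            · rw [RumorAux.cnt_knowAll_eq_spreadAll]
            · rw [Nat.cast_sum, RumorAux.sum_div_ennreal]
              apply Finset.sum_congr rfl
              intro s hs
              have hsu : s ≤ u := by have := Finset.mem_range.1 hs; omega
              rw [Nat.cast_mul, hpowsplit hsu, div_eq_mul_inv, div_eq_mul_inv, div_eq_mul_inv,
                ENNReal.mul_inv (Or.inl (hpow0 s)) (Or.inl (hpowtop s))]
              ring
    -- the first-know probabilities sum to at most 1
    have hsum1 : (∑' s : ℕ, F s / m ^ s) ≤ 1 := by
      apply Summable.tsum_le_of_sum_range_le ENNReal.summable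
      intro k
      have hNat := RumorAux.sum_liftF_le (G := G) x k
      have hstep : ∀ s ∈ Finset.range k,
          F s / m ^ s
            = ((RumorAux.cnt (RumorAux.firstKnow x s (G := G))
                  * Fintype.card G.edgeSet ^ (k - s) : ℕ) : ℝ≥0∞) / m ^ k := by
        intro s hs
        have hsk : s ≤ k := by have := Finset.mem_range.1 hs; omega
        rw [Nat.cast_mul, Nat.cast_pow, ← hm, hpowsplit hsk,
          ENNReal.mul_div_mul_right _ _ (hpow0 (k - s)) (hpowtop (k - s))]
      rw [Finset.sum_congr rfl hstep, ← RumorAux.sum_div_ennreal, ← Nat.cast_sum]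
      calc (((∑ s ∈ Finset.range k,
              RumorAux.cnt (RumorAux.firstKnow x s (G := G))
                * Fintype.card G.edgeSet ^ (k - s) : ℕ)) : ℝ≥0∞) / m ^ k
          ≤ ((Fintype.card G.edgeSet ^ k : ℕ) : ℝ≥0∞) / m ^ k :=
            ENNReal.div_le_div_right (by exact_mod_cast hNat) _
        _ = 1 := by
            rw [Nat.cast_pow, ← hm]
            exact ENNReal.div_self (hpow0 k) (hpowtop k)
    calc (∑' u : ℕ,
          (RumorAux.cnt (fun σ : Fin u → G.edgeSet => ¬ RumorAux.allUniv σ) : ℝ≥0∞) / m ^ u)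
        ≤ ∑' u : ℕ, (Sp u / m ^ u
            + ∑ s ∈ Finset.range (u + 1), (F s / m ^ s) * (Sp (u - s) / m ^ (u - s))) :=
          ENNReal.tsum_le_tsum key
      _ = (∑' u : ℕ, Sp u / m ^ u)
          + ∑' u : ℕ, ∑ s ∈ Finset.range (u + 1),
              (F s / m ^ s) * (Sp (u - s) / m ^ (u - s)) := ENNReal.tsum_add
      _ = (∑' u : ℕ, Sp u / m ^ u)
          + (∑' s : ℕ, F s / m ^ s) * (∑' t : ℕ, Sp t / m ^ t) := by
          rw [RumorAux.tsum_conv (fun s => F s / m ^ s) (fun t => Sp t / m ^ t)]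
      _ ≤ (∑' u : ℕ, Sp u / m ^ u) + 1 * (∑' t : ℕ, Sp t / m ^ t) :=
          add_le_add le_rfl (mul_le_mul_left hsum1 _)
      _ = 2 * ∑' u : ℕ, Sp u / m ^ u := by rw [one_mul, two_mul]
end

section
/- For the rumor process on K_n, conditioned on site x being the k-th site (in the ordering by time of learning all informations, ties broken uniformly) to know all informations, the expected remaining time until all sites know all informations satisfies E[S_x | σ(x)=k] ≤ ((n-1)/2)·(H(n-1) − H(k-1) + H(n-k)). -/
open scoped ENNReal Classical

/-- Configuration after the first `s` steps of the edge list `l`, on `K_n`,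
starting from each site knowing its own (distinct) information. -/
noncomputable def confAt {n : ℕ} (l : List (Sym2 (Fin n))) (s : ℕ) : Fin n → Set (Fin n) :=
  (l.take s).foldl updateInfo (fun v => {v})

/-- Site `x` knows all informations at time `s`. -/
def knowsAllAt {n : ℕ} (l : List (Sym2 (Fin n))) (s : ℕ) (x : Fin n) : Prop :=
  confAt l s x = Set.univ

/-- `Y_x`: first time site `x` knows all informations. -/
noncomputable def Yt {n : ℕ} (l : List (Sym2 (Fin n))) (x : Fin n) : ℕ :=
  sInf {s : ℕ | knowsAllAt l s x}

/-- `N(t)`: number of sites knowing all informations at time `t`. -/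
noncomputable def Nt {n : ℕ} (l : List (Sym2 (Fin n))) (s : ℕ) : ℕ :=
  (Finset.univ.filter fun v => knowsAllAt l s v).card

/-- The tie-breaking correction `L_x`, using the fair coins `c`. -/
noncomputable def Lt {n : ℕ} (l : List (Sym2 (Fin n))) (c : Fin n → Bool) (x : Fin n) : ℕ :=
  if Nt l (Yt l x) - Nt l (Yt l x - 1) = 2 then
    if hne : (Finset.univ.filter fun y => Yt l y = Yt l x).Nonempty then
      let α := (Finset.univ.filter fun y => Yt l y = Yt l x).min' hne
      if x = α then (if c α then 1 else 0) else (if c α then 0 else 1)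
    else 0
  else 0

/-- `σ(x) = N(Y_x) - L_x`: the rank of site `x` in the order of learning all informations. -/
noncomputable def rnk {n : ℕ} (l : List (Sym2 (Fin n))) (c : Fin n → Bool) (x : Fin n) : ℕ :=
  Nt l (Yt l x) - Lt l c x

/-- Probability, at horizon `t` (with `t` i.i.d. uniform edge choices and independent fair
coins), that site `x` has learnt all informations by time `t` and has rank `k`. -/
noncomputable def rankProb (n k : ℕ) (x : Fin n) (t : ℕ) : ℝ≥0∞ :=
  letI : Fintype (⊤ : SimpleGraph (Fin n)).edgeSet := (Set.toFinite _).fintype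
  unifProb (fun ω : (Fin t → (⊤ : SimpleGraph (Fin n)).edgeSet) × (Fin n → Bool) =>
    knowsAllAt (List.ofFn fun i => ((ω.1 i : Sym2 (Fin n)))) t x ∧
      rnk (List.ofFn fun i => ((ω.1 i : Sym2 (Fin n)))) ω.2 x = k)

/-- `τ_V`: first time all sites know all informations. -/
noncomputable def tauAll {n : ℕ} (l : List (Sym2 (Fin n))) : ℕ :=
  sInf {s : ℕ | ∀ v : Fin n, knowsAllAt l s v}

/-- Horizon-`t` expectation of `S_x · 1{σ(x) = k}`, where `S_x = τ_V - Y_x` is the remaining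
time after site `x` knows all informations (truncated at the horizon `t`). -/
noncomputable def rankRemExp (n k : ℕ) (x : Fin n) (t : ℕ) : ℝ≥0∞ :=
  letI : Fintype (⊤ : SimpleGraph (Fin n)).edgeSet := (Set.toFinite _).fintype
  unifExp (fun ω : (Fin t → (⊤ : SimpleGraph (Fin n)).edgeSet) × (Fin n → Bool) =>
    let l := List.ofFn fun i => ((ω.1 i : Sym2 (Fin n)))
    if knowsAllAt l t x ∧ rnk l ω.2 x = k then
      (((if ∀ v : Fin n, knowsAllAt l t v then tauAll l else t) - Yt l x : ℕ) : ℝ≥0∞)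
    else 0)

-- auxiliary lemmas, part 1: monotonicity
lemma subset_foldl {V I : Type*} (l : List (Sym2 V)) (f : V → Set I) (v : V) :
    f v ⊆ (l.foldl updateInfo f) v := by
  induction l generalizing f with
  | nil => exact subset_rfl
  | cons e l ih =>
    refine subset_trans ?_ (ih (updateInfo f e))
    unfold updateInfo
    by_cases h : v ∈ e
    · simp only [h, if_pos]
      exact Set.subset_biUnion_of_mem (u := fun w => f w) h
    · simp [h]

lemma confAt_mono {n : ℕ} (l : List (Sym2 (Fin n))) {s s' : ℕ} (h : s ≤ s') (v : Fin n) :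
    confAt l s v ⊆ confAt l s' v := by
  have h1 : l.take s' = l.take s ++ (l.take s').drop s := by
    conv_lhs => rw [← List.take_append_drop s (l.take s')]
    rw [List.take_take, min_eq_left h]
  unfold confAt
  rw [h1, List.foldl_append]
  exact subset_foldl _ _ v

lemma knowsAllAt_mono {n : ℕ} (l : List (Sym2 (Fin n))) {s s' : ℕ} (h : s ≤ s') {x : Fin n}
    (hx : knowsAllAt l s x) : knowsAllAt l s' x := by
  unfold knowsAllAt at *
  exact Set.eq_univ_of_univ_subset (hx ▸ confAt_mono l h x)

lemma knowsAllAt_Yt {n : ℕ} {l : List (Sym2 (Fin n))} {u : ℕ} {x : Fin n}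
    (h : knowsAllAt l u x) : knowsAllAt l (Yt l x) x :=
  Nat.sInf_mem (⟨u, h⟩ : Set.Nonempty {s : ℕ | knowsAllAt l s x})

lemma Yt_le {n : ℕ} {l : List (Sym2 (Fin n))} {s : ℕ} {x : Fin n}
    (h : knowsAllAt l s x) : Yt l x ≤ s := Nat.sInf_le h

lemma knowsAllAt_of_Yt_le {n : ℕ} {l : List (Sym2 (Fin n))} {u s : ℕ} {x : Fin n}
    (h : knowsAllAt l u x) (hs : Yt l x ≤ s) : knowsAllAt l s x :=
  knowsAllAt_mono l hs (knowsAllAt_Yt h)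

lemma Nt_mono {n : ℕ} (l : List (Sym2 (Fin n))) {s s' : ℕ} (h : s ≤ s') :
    Nt l s ≤ Nt l s' := by
  apply Finset.card_le_card
  intro v hv
  simp only [Finset.mem_filter, Finset.mem_univ, true_and] at *
  exact knowsAllAt_mono l h hv

lemma Nt_le {n : ℕ} (l : List (Sym2 (Fin n))) (s : ℕ) : Nt l s ≤ n := by
  simpa [Nt] using Finset.card_le_card (Finset.filter_subset _ (Finset.univ : Finset (Fin n)))

lemma Nt_lt_of_not_all {n : ℕ} (l : List (Sym2 (Fin n))) (s : ℕ)
    (h : ¬ ∀ v : Fin n, knowsAllAt l s v) : Nt l s < n := by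
  rcases lt_or_eq_of_le (Nt_le l s) with h1 | h1
  · exact h1
  · exfalso
    apply h
    intro v
    have : (Finset.univ.filter fun v => knowsAllAt l s v) = Finset.univ := by
      apply Finset.eq_univ_of_card
      simpa [Fintype.card_fin, Nt] using h1
    have := Finset.mem_filter.mp (this ▸ Finset.mem_univ v)
    exact this.2

lemma confAt_take {n : ℕ} {l l' : List (Sym2 (Fin n))} {s u : ℕ} (hu : u ≤ s)
    (h : l.take s = l'.take s) : confAt l u = confAt l' u := by
  unfold confAt
  rw [show l.take u = (l.take s).take u by rw [List.take_take, min_eq_left hu],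
    show l'.take u = (l'.take s).take u by rw [List.take_take, min_eq_left hu], h]

lemma knowsAllAt_take {n : ℕ} {l l' : List (Sym2 (Fin n))} {s u : ℕ} (hu : u ≤ s)
    (h : l.take s = l'.take s) (y : Fin n) : knowsAllAt l u y ↔ knowsAllAt l' u y := by
  unfold knowsAllAt
  rw [confAt_take hu h]

lemma Nt_take {n : ℕ} {l l' : List (Sym2 (Fin n))} {s u : ℕ} (hu : u ≤ s)
    (h : l.take s = l'.take s) : Nt l u = Nt l' u := by
  unfold Nt
  congr 1
  apply Finset.filter_congr
  intro y _
  simp [knowsAllAt_take hu h y]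

lemma Yt_take {n : ℕ} {l l' : List (Sym2 (Fin n))} {s : ℕ}
    (h : l.take s = l'.take s) {y : Fin n} (hy : knowsAllAt l (Yt l y) y)
    (hs : Yt l y ≤ s) : Yt l' y = Yt l y := by
  have h1 : knowsAllAt l' (Yt l y) y := (knowsAllAt_take hs h y).mp hy
  have h2 : Yt l' y ≤ Yt l y := Yt_le h1
  rcases lt_or_eq_of_le h2 with h3 | h3
  · exfalso
    have h4 : knowsAllAt l' (Yt l' y) y := knowsAllAt_Yt h1
    have h5 : knowsAllAt l (Yt l' y) y :=
      (knowsAllAt_take (le_trans h2 hs) h y).mpr h4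
    exact absurd (Yt_le h5) (not_le.mpr (lt_of_lt_of_le h3 (le_refl _)))
  · exact h3
-- part 2: rnk depends only on the history up to Y_x
lemma confAt_zero {n : ℕ} (l : List (Sym2 (Fin n))) : confAt l 0 = fun v => {v} := by
  unfold confAt
  simp

lemma Yt_pos {n : ℕ} (hn : 2 ≤ n) (l : List (Sym2 (Fin n))) {x : Fin n}
    (hx : knowsAllAt l (Yt l x) x) : 1 ≤ Yt l x := by
  by_contra h
  have h0 : Yt l x = 0 := by omega
  rw [h0] at hx
  unfold knowsAllAt at hx
  rw [confAt_zero] at hx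
  haveI : Nontrivial (Fin n) := Fin.nontrivial_iff_two_le.mpr hn
  obtain ⟨y, hy⟩ := exists_ne x
  have hmem : y ∈ ({x} : Set (Fin n)) := by
    have : ({x} : Set (Fin n)) = Set.univ := hx
    rw [this]; trivial
  exact hy (Set.mem_singleton_iff.mp hmem)

lemma Yt_filter_take {n : ℕ} (hn : 2 ≤ n) {l l' : List (Sym2 (Fin n))} {s : ℕ}
    (h : l.take s = l'.take s) {x : Fin n} (hx : knowsAllAt l (Yt l x) x)
    (hs : Yt l x ≤ s) :
    (Finset.univ.filter fun y => Yt l y = Yt l x) =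
      (Finset.univ.filter fun y => Yt l' y = Yt l' x) := by
  have hx' : knowsAllAt l' (Yt l' x) x := by
    rw [Yt_take h hx hs]
    exact (knowsAllAt_take hs h x).mp hx
  have hxx : Yt l' x = Yt l x := Yt_take h hx hs
  have hpos : 1 ≤ Yt l x := Yt_pos hn l hx
  ext y
  simp only [Finset.mem_filter, Finset.mem_univ, true_and]
  constructor
  · intro hy
    have hne : knowsAllAt l (Yt l y) y := by
      rcases Set.eq_empty_or_nonempty {s : ℕ | knowsAllAt l s y} with he | he
      · exfalso
        have : Yt l y = 0 := by unfold Yt; rw [he]; exact Nat.sInf_empty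
        omega
      · exact Nat.sInf_mem he
    rw [hxx, ← hy]
    exact Yt_take h hne (hy ▸ hs)
  · intro hy
    have hne : knowsAllAt l' (Yt l' y) y := by
      rcases Set.eq_empty_or_nonempty {s : ℕ | knowsAllAt l' s y} with he | he
      · exfalso
        have : Yt l' y = 0 := by unfold Yt; rw [he]; exact Nat.sInf_empty
        omega
      · exact Nat.sInf_mem he
    have hy' : Yt l' y ≤ s := by omega
    have h2 := Yt_take h.symm hne hy'
    rw [h2, hy, hxx]

lemma rnk_take {n : ℕ} (hn : 2 ≤ n) {l l' : List (Sym2 (Fin n))} {s : ℕ}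
    (h : l.take s = l'.take s) {x : Fin n} (hx : knowsAllAt l (Yt l x) x)
    (hs : Yt l x ≤ s) (c : Fin n → Bool) : rnk l' c x = rnk l c x := by
  have hxx : Yt l' x = Yt l x := Yt_take h hx hs
  have hN : ∀ u ≤ s, Nt l' u = Nt l u := fun u hu => (Nt_take hu h).symm
  have hfil := Yt_filter_take hn h hx hs
  unfold rnk Lt
  rw [hxx] at hfil
  rw [hxx, hN _ hs, hN _ (by omega), ← hfil]
-- part 3: crossing edges
lemma confAt_succ {n : ℕ} (l : List (Sym2 (Fin n))) {s : ℕ} (hs : s < l.length) :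
    confAt l (s + 1) = updateInfo (confAt l s) l[s] := by
  unfold confAt
  rw [List.take_succ, List.getElem?_eq_getElem hs, Option.toList_some, List.foldl_append,
    List.foldl_cons, List.foldl_nil]

lemma knowsAllAt_succ_of_cross {n : ℕ} (l : List (Sym2 (Fin n))) {s : ℕ} (hs : s < l.length)
    {u v : Fin n} (hu : knowsAllAt l s u) (huv : u ∈ l[s]) (hvv : v ∈ l[s]) :
    knowsAllAt l (s + 1) v := by
  unfold knowsAllAt at *
  rw [confAt_succ l hs]
  apply Set.eq_univ_of_univ_subset
  unfold updateInfo
  rw [if_pos hvv]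
  calc (Set.univ : Set (Fin n)) = confAt l s u := hu.symm
    _ ⊆ ⋃ w ∈ {w | w ∈ l[s]}, confAt l s w := Set.subset_biUnion_of_mem huv

lemma Nt_lt_of_cross {n : ℕ} (l : List (Sym2 (Fin n))) {s : ℕ} (hs : s < l.length)
    {u v : Fin n} (hu : knowsAllAt l s u) (hv : ¬ knowsAllAt l s v)
    (huv : u ∈ l[s]) (hvv : v ∈ l[s]) : Nt l s < Nt l (s + 1) := by
  have h1 : insert v (Finset.univ.filter fun w => knowsAllAt l s w) ⊆
      Finset.univ.filter fun w => knowsAllAt l (s+1) w := by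
    intro w hw
    rcases Finset.mem_insert.mp hw with h | h
    · subst h
      simp only [Finset.mem_filter, Finset.mem_univ, true_and]
      exact knowsAllAt_succ_of_cross l hs hu huv hvv
    · simp only [Finset.mem_filter, Finset.mem_univ, true_and] at h ⊢
      exact knowsAllAt_mono l (Nat.le_succ s) h
  have h2 : v ∉ (Finset.univ.filter fun w => knowsAllAt l s w) := by
    simp [hv]
  calc Nt l s < (insert v (Finset.univ.filter fun w => knowsAllAt l s w)).card := by
        rw [Finset.card_insert_of_notMem h2]; exact Nat.lt_succ_self _
    _ ≤ Nt l (s+1) := Finset.card_le_card h1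

/-- crossing predicate for an edge of `K_n` w.r.t. a set `F`. -/
def crossE {n : ℕ} (F : Finset (Fin n)) (e : (⊤ : SimpleGraph (Fin n)).edgeSet) : Prop :=
  ∃ u v : Fin n, u ∈ F ∧ v ∉ F ∧ (e : Sym2 (Fin n)) = s(u, v)

lemma cross_card {n : ℕ} [Fintype (⊤ : SimpleGraph (Fin n)).edgeSet] (F : Finset (Fin n)) :
    F.card * (n - F.card) ≤ (Finset.univ.filter (crossE F)).card := by
  have key : (F ×ˢ Fᶜ).card =
      ((F ×ˢ Fᶜ).image (fun p : Fin n × Fin n => s(p.1, p.2))).card := by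
    rw [Finset.card_image_of_injOn]
    intro p hp q hq hpq
    simp only [Finset.mem_product, Finset.mem_coe, Finset.mem_compl] at hp hq
    rcases Sym2.eq_iff.mp hpq with ⟨h1, h2⟩ | ⟨h1, h2⟩
    · exact Prod.ext h1 h2
    · exact absurd (h1 ▸ hp.1) hq.2
  have hsub : (F ×ˢ Fᶜ).image (fun p : Fin n × Fin n => s(p.1, p.2)) ⊆
      (Finset.univ.filter (crossE F)).image
        (fun e : (⊤ : SimpleGraph (Fin n)).edgeSet => (e : Sym2 (Fin n))) := by
    intro a ha
    obtain ⟨p, hp, rfl⟩ := Finset.mem_image.mp ha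
    simp only [Finset.mem_product, Finset.mem_compl] at hp
    have hne : p.1 ≠ p.2 := fun h => hp.2 (h ▸ hp.1)
    have hmem : s(p.1, p.2) ∈ (⊤ : SimpleGraph (Fin n)).edgeSet := by
      rw [SimpleGraph.mem_edgeSet, SimpleGraph.top_adj]; exact hne
    apply Finset.mem_image.mpr
    refine ⟨⟨s(p.1, p.2), hmem⟩, ?_, rfl⟩
    simp only [Finset.mem_filter, Finset.mem_univ, true_and]
    exact ⟨p.1, p.2, hp.1, hp.2, rfl⟩
  calc F.card * (n - F.card) = (F ×ˢ Fᶜ).card := by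
        rw [Finset.card_product, Finset.card_compl, Fintype.card_fin]
    _ = _ := key
    _ ≤ ((Finset.univ.filter (crossE F)).image
        (fun e : (⊤ : SimpleGraph (Fin n)).edgeSet => (e : Sym2 (Fin n)))).card :=
        Finset.card_le_card hsub
    _ ≤ (Finset.univ.filter (crossE F)).card := Finset.card_image_le

lemma noncross_card {n : ℕ} [Fintype (⊤ : SimpleGraph (Fin n)).edgeSet] (F : Finset (Fin n))
    (p : (⊤ : SimpleGraph (Fin n)).edgeSet → Prop) [DecidablePred p]
    (hp : ∀ e, p e → ¬ crossE F e) :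
    (Finset.univ.filter p).card ≤
      Fintype.card (⊤ : SimpleGraph (Fin n)).edgeSet - F.card * (n - F.card) := by
  have h1 : (Finset.univ.filter p).card ≤ (Finset.univ.filter (fun e => ¬ crossE F e)).card := by
    apply Finset.card_le_card
    intro e he
    simp only [Finset.mem_filter, Finset.mem_univ, true_and] at he ⊢
    exact hp e he
  have h2 : (Finset.univ.filter (fun e => ¬ crossE F e)).card =
      Fintype.card (⊤ : SimpleGraph (Fin n)).edgeSet - (Finset.univ.filter (crossE F)).card := by
    have := Finset.card_filter_add_card_filter_not
      (s := (Finset.univ : Finset (⊤ : SimpleGraph (Fin n)).edgeSet)) (p := crossE F)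
    rw [Finset.card_univ] at this
    omega
  rw [h2] at h1
  exact le_trans h1 (Nat.sub_le_sub_left (cross_card F) _)

lemma cross_le_M {n : ℕ} [Fintype (⊤ : SimpleGraph (Fin n)).edgeSet] {j : ℕ} (hj : j ≤ n) :
    j * (n - j) ≤ Fintype.card (⊤ : SimpleGraph (Fin n)).edgeSet := by
  obtain ⟨F, -, hF⟩ := Finset.exists_subset_card_eq
    (s := (Finset.univ : Finset (Fin n))) (n := j) (by simpa using hj)
  calc j * (n - j) = F.card * (n - F.card) := by rw [hF]
    _ ≤ (Finset.univ.filter (crossE F)).card := cross_card F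
    _ ≤ _ := by rw [← Finset.card_univ]; exact Finset.card_le_card (Finset.filter_subset _ _)
-- part 4: events on the sample space
variable {n t : ℕ} [Fintype ((⊤ : SimpleGraph (Fin n)).edgeSet)]

/-- Sample space at horizon `t`. -/
def lw {n t : ℕ} [Fintype ((⊤ : SimpleGraph (Fin n)).edgeSet)]
    (ω : (Fin t → (⊤ : SimpleGraph (Fin n)).edgeSet) × (Fin n → Bool)) : List (Sym2 (Fin n)) :=
  List.ofFn fun i => ((ω.1 i : Sym2 (Fin n)))

def Aev (n k : ℕ) (x : Fin n) (t : ℕ) [Fintype ((⊤ : SimpleGraph (Fin n)).edgeSet)]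
    (ω : (Fin t → (⊤ : SimpleGraph (Fin n)).edgeSet) × (Fin n → Bool)) : Prop :=
  knowsAllAt (lw ω) t x ∧ rnk (lw ω) ω.2 x = k

def Cev (n k : ℕ) (x : Fin n) (t : ℕ) [Fintype ((⊤ : SimpleGraph (Fin n)).edgeSet)]
    (j s : ℕ) (ω : (Fin t → (⊤ : SimpleGraph (Fin n)).edgeSet) × (Fin n → Bool)) : Prop :=
  Aev n k x t ω ∧ Yt (lw ω) x ≤ s ∧ Nt (lw ω) s = j

def Dev (n k : ℕ) (x : Fin n) (t : ℕ) [Fintype ((⊤ : SimpleGraph (Fin n)).edgeSet)]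
    (j s : ℕ) (ω : (Fin t → (⊤ : SimpleGraph (Fin n)).edgeSet) × (Fin n → Bool)) : Prop :=
  Cev n k x t j s ω ∧ ∀ u < s, ¬ Cev n k x t j u ω

/-- conjunction event, kept as a `def` so that classical decidability is used uniformly. -/
def Bev (n k : ℕ) (x : Fin n) (t : ℕ) [Fintype ((⊤ : SimpleGraph (Fin n)).edgeSet)]
    (j s : ℕ) (ω : (Fin t → (⊤ : SimpleGraph (Fin n)).edgeSet) × (Fin n → Bool)) : Prop :=
  Cev n k x t j (s+1) ω ∧ Cev n k x t j s ω

lemma lw_length (ω : (Fin t → (⊤ : SimpleGraph (Fin n)).edgeSet) × (Fin n → Bool)) :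
    (lw ω).length = t := by simp [lw]

lemma lw_take_eq {s : ℕ}
    (ω ω' : (Fin t → (⊤ : SimpleGraph (Fin n)).edgeSet) × (Fin n → Bool))
    (h : ∀ i : Fin t, (i : ℕ) < s → ω.1 i = ω'.1 i) :
    (lw ω).take s = (lw ω').take s := by
  apply List.ext_getElem
  · simp [lw]
  · intro i h1 h2
    simp only [List.length_take, lw, List.length_ofFn, lt_min_iff] at h1
    rw [List.getElem_take, List.getElem_take]
    simp only [lw, List.getElem_ofFn]
    exact congrArg _ (h ⟨i, h1.2⟩ h1.1)

lemma Cev_dep {k : ℕ} {x : Fin n} (hn : 2 ≤ n) {j s : ℕ} (hst : s ≤ t)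
    (ω ω' : (Fin t → (⊤ : SimpleGraph (Fin n)).edgeSet) × (Fin n → Bool))
    (hco : ω.2 = ω'.2) (h : (lw ω).take s = (lw ω').take s) :
    Cev n k x t j s ω → Cev n k x t j s ω' := by
  rintro ⟨⟨hka, hrk⟩, hY, hN⟩
  have hYx : knowsAllAt (lw ω) (Yt (lw ω) x) x := knowsAllAt_Yt hka
  have hY' : Yt (lw ω') x = Yt (lw ω) x := Yt_take h hYx hY
  have hka' : knowsAllAt (lw ω') (Yt (lw ω') x) x := by
    rw [hY']; exact (knowsAllAt_take hY h x).mp hYx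
  refine ⟨⟨?_, ?_⟩, ?_, ?_⟩
  · exact knowsAllAt_mono _ (by omega) hka'
  · rw [← hco, rnk_take hn h hYx hY]
    exact hrk
  · omega
  · rw [← Nt_take (le_refl s) h]
    exact hN

lemma Cev_interval {k : ℕ} {x : Fin n} {j s u s'' : ℕ}
    {ω : (Fin t → (⊤ : SimpleGraph (Fin n)).edgeSet) × (Fin n → Bool)}
    (h1 : Cev n k x t j s ω) (h2 : Cev n k x t j s'' ω) (hsu : s ≤ u) (hus : u ≤ s'') :
    Cev n k x t j u ω := by
  refine ⟨h1.1, le_trans h1.2.1 hsu, le_antisymm ?_ ?_⟩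
  · rw [← h2.2.2]; exact Nt_mono _ hus
  · rw [← h1.2.2]; exact Nt_mono _ hsu
-- part 5: counting
noncomputable def cnt (n t : ℕ) [Fintype ((⊤ : SimpleGraph (Fin n)).edgeSet)]
    (P : (Fin t → (⊤ : SimpleGraph (Fin n)).edgeSet) × (Fin n → Bool) → Prop) : ℕ :=
  (Finset.univ.filter P).card

lemma cnt_slice (σ : Fin t)
    (P : (Fin t → (⊤ : SimpleGraph (Fin n)).edgeSet) × (Fin n → Bool) → Prop) :
    cnt n t P = ∑ b : Fin n → Bool,
      ∑ r : {i : Fin t // i ≠ σ} → (⊤ : SimpleGraph (Fin n)).edgeSet,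
      (Finset.univ.filter
        (fun e : (⊤ : SimpleGraph (Fin n)).edgeSet =>
          P ((Equiv.funSplitAt σ _).symm (e, r), b))).card := by
  unfold cnt
  rw [Finset.card_filter, Fintype.sum_prod_type, Finset.sum_comm]
  apply Finset.sum_congr rfl
  intro b _
  rw [← Equiv.sum_comp (Equiv.funSplitAt σ ((⊤ : SimpleGraph (Fin n)).edgeSet)).symm
    (fun g => if P (g, b) then 1 else 0), Fintype.sum_prod_type, Finset.sum_comm]
  apply Finset.sum_congr rfl
  intro r _
  rw [Finset.card_filter]

lemma step_count {k : ℕ} {x : Fin n} (hn : 2 ≤ n) (j : ℕ) {s : ℕ} (hst : s < t) :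
    Fintype.card ((⊤ : SimpleGraph (Fin n)).edgeSet) *
        cnt n t (Bev n k x t j s)
      ≤ (Fintype.card ((⊤ : SimpleGraph (Fin n)).edgeSet) - j * (n - j)) *
        cnt n t (Cev n k x t j s) := by
  set M := Fintype.card ((⊤ : SimpleGraph (Fin n)).edgeSet) with hM
  set σ : Fin t := ⟨s, hst⟩ with hσ
  rw [cnt_slice σ, cnt_slice σ, Finset.mul_sum, Finset.mul_sum]
  refine Finset.sum_le_sum fun b _ => ?_
  rw [Finset.mul_sum, Finset.mul_sum]
  refine Finset.sum_le_sum fun r _ => ?_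
  set g : (⊤ : SimpleGraph (Fin n)).edgeSet →
      (Fin t → (⊤ : SimpleGraph (Fin n)).edgeSet) × (Fin n → Bool) :=
    fun e => ((Equiv.funSplitAt σ _).symm (e, r), b) with hg
  show M * (Finset.univ.filter
        (fun e : (⊤ : SimpleGraph (Fin n)).edgeSet => Bev n k x t j s (g e))).card
    ≤ (M - j * (n - j)) * (Finset.univ.filter
        (fun e : (⊤ : SimpleGraph (Fin n)).edgeSet => Cev n k x t j s (g e))).card
  have htake : ∀ e e' : (⊤ : SimpleGraph (Fin n)).edgeSet,
      (lw (g e)).take s = (lw (g e')).take s := by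
    intro e e'
    apply lw_take_eq
    intro i hi
    have hiσ : i ≠ σ := by
      intro hh
      rw [hh] at hi
      simp [hσ] at hi
    simp only [hg, Equiv.funSplitAt_symm_apply, dif_neg hiσ]
  have hsame : ∀ e e' : (⊤ : SimpleGraph (Fin n)).edgeSet,
      Cev n k x t j s (g e) → Cev n k x t j s (g e') := by
    intro e e' hc
    exact Cev_dep hn (le_of_lt hst) (g e) (g e') rfl (htake e e') hc
  by_cases hex : ∃ e0, Cev n k x t j s (g e0)
  · obtain ⟨e0, he0⟩ := hex
    have hall : ∀ e, Cev n k x t j s (g e) := fun e => hsame e0 e he0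
    have hR : (Finset.univ.filter
        (fun e : (⊤ : SimpleGraph (Fin n)).edgeSet => Cev n k x t j s (g e))).card = M := by
      rw [Finset.filter_true_of_mem (fun e _ => hall e), Finset.card_univ]
    rw [hR]
    set F := Finset.univ.filter (fun v => knowsAllAt (lw (g e0)) s v) with hF
    have hFcard : F.card = j := he0.2.2
    have hnc : ∀ e, Bev n k x t j s (g e) → ¬ crossE F e := by
      rintro e ⟨h1, h2⟩ ⟨u, v, hu, hv, hev⟩
      have hsl : s < (lw (g e)).length := by rw [lw_length]; exact hst
      have hu0 : knowsAllAt (lw (g e0)) s u := by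
        simpa [hF] using (Finset.mem_filter.mp hu).2
      have hu' : knowsAllAt (lw (g e)) s u :=
        (knowsAllAt_take (le_refl s) (htake e0 e) u).mp hu0
      have hv' : ¬ knowsAllAt (lw (g e)) s v := by
        intro hvk
        apply hv
        rw [hF]
        simp only [Finset.mem_filter, Finset.mem_univ, true_and]
        exact (knowsAllAt_take (le_refl s) (htake e0 e) v).mpr hvk
      have hget : (lw (g e))[s]'hsl = (e : Sym2 (Fin n)) := by
        simp [lw, hg, hσ, Equiv.funSplitAt_symm_apply, List.getElem_ofFn]
      have hum : u ∈ (lw (g e))[s]'hsl := by rw [hget, hev]; exact Sym2.mem_mk_left u v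
      have hvm : v ∈ (lw (g e))[s]'hsl := by rw [hget, hev]; exact Sym2.mem_mk_right u v
      have := Nt_lt_of_cross (lw (g e)) hsl hu' hv' hum hvm
      have e1 := h1.2.2
      have e2 := h2.2.2
      omega
    have hL : (Finset.univ.filter
        (fun e : (⊤ : SimpleGraph (Fin n)).edgeSet => Bev n k x t j s (g e))).card
        ≤ M - j * (n - j) := by
      calc (Finset.univ.filter
            (fun e : (⊤ : SimpleGraph (Fin n)).edgeSet => Bev n k x t j s (g e))).card
          ≤ Fintype.card ((⊤ : SimpleGraph (Fin n)).edgeSet) - F.card * (n - F.card) :=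
            noncross_card F _ hnc
        _ = M - j * (n - j) := by rw [hFcard]
    calc M * (Finset.univ.filter
          (fun e : (⊤ : SimpleGraph (Fin n)).edgeSet => Bev n k x t j s (g e))).card
        ≤ M * (M - j * (n - j)) := Nat.mul_le_mul_left _ hL
      _ = (M - j * (n - j)) * M := Nat.mul_comm _ _
  · have hz : (Finset.univ.filter
        (fun e : (⊤ : SimpleGraph (Fin n)).edgeSet => Bev n k x t j s (g e))).card = 0 := by
      rw [Finset.card_eq_zero, Finset.filter_eq_empty_iff]
      intro e _
      intro h
      exact hex ⟨e, h.2⟩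
    rw [hz, Nat.mul_zero]
    exact Nat.zero_le _

lemma entries_le (k : ℕ) (x : Fin n) (j : ℕ) :
    (∑ s ∈ Finset.range (t+1), cnt n t (Dev n k x t j s)) ≤ cnt n t (Aev n k x t) := by
  unfold cnt
  have hd : ∀ s1 ∈ Finset.range (t+1), ∀ s2 ∈ Finset.range (t+1), s1 ≠ s2 →
      Disjoint (Finset.univ.filter (Dev n k x t j s1))
        (Finset.univ.filter (Dev n k x t j s2)) := by
    intro s1 _ s2 _ hne
    rw [Finset.disjoint_left]
    intro ω h1 h2
    simp only [Finset.mem_filter, Finset.mem_univ, true_and] at h1 h2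
    rcases Nat.lt_or_ge s1 s2 with h | h
    · exact h2.2 s1 h h1.1
    · exact h1.2 s2 (by omega) h2.1
  calc (∑ s ∈ Finset.range (t+1), (Finset.univ.filter (Dev n k x t j s)).card)
      = ((Finset.range (t+1)).biUnion
          (fun s => Finset.univ.filter (Dev n k x t j s))).card := (Finset.card_biUnion hd).symm
    _ ≤ (Finset.univ.filter (Aev n k x t)).card := by
        apply Finset.card_le_card
        intro ω hω
        simp only [Finset.mem_biUnion, Finset.mem_filter, Finset.mem_univ, true_and] at hω ⊢
        obtain ⟨s, _, hs⟩ := hω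
        exact hs.1.1

lemma cnt_mono (P Q : (Fin t → (⊤ : SimpleGraph (Fin n)).edgeSet) × (Fin n → Bool) → Prop)
    (h : ∀ ω, P ω → Q ω) : cnt n t P ≤ cnt n t Q := by
  unfold cnt
  apply Finset.card_le_card
  intro ω hω
  simp only [Finset.mem_filter, Finset.mem_univ, true_and] at hω ⊢
  exact h ω hω

lemma cnt_union_le (P Q R : (Fin t → (⊤ : SimpleGraph (Fin n)).edgeSet) × (Fin n → Bool) → Prop)
    (h : ∀ ω, P ω → Q ω ∨ R ω) : cnt n t P ≤ cnt n t Q + cnt n t R := by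
  unfold cnt
  calc (Finset.univ.filter P).card
      ≤ ((Finset.univ.filter Q) ∪ (Finset.univ.filter R)).card := by
        apply Finset.card_le_card
        intro ω hω
        simp only [Finset.mem_filter, Finset.mem_univ, true_and, Finset.mem_union] at hω ⊢
        exact h ω hω
    _ ≤ _ := Finset.card_union_le _ _

lemma count_induction {k : ℕ} {x : Fin n} (hn : 2 ≤ n) {j : ℕ} (hj : j ≤ n) :
    ∀ T, T ≤ t →
      j * (n - j) * (∑ s ∈ Finset.range T, cnt n t (Cev n k x t j s))
          + Fintype.card ((⊤ : SimpleGraph (Fin n)).edgeSet) * cnt n t (Cev n k x t j T)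
        ≤ Fintype.card ((⊤ : SimpleGraph (Fin n)).edgeSet) *
          ∑ s ∈ Finset.range (T+1), cnt n t (Dev n k x t j s) := by
  set M := Fintype.card ((⊤ : SimpleGraph (Fin n)).edgeSet) with hM
  set m := j * (n - j) with hm
  have hmM : m ≤ M := cross_le_M hj
  intro T
  induction T with
  | zero =>
    intro _
    simp only [Finset.range_zero, Finset.sum_empty, Nat.mul_zero, Nat.zero_add,
      Finset.range_one, Finset.sum_singleton]
    apply Nat.mul_le_mul_left
    apply cnt_mono
    intro ω hω
    exact ⟨hω, fun u hu => absurd hu (Nat.not_lt_zero u)⟩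
  | succ T ih =>
    intro hT1
    have hTt : T < t := by omega
    have IH := ih (by omega)
    have hstep := step_count (k := k) (x := x) hn j hTt
    have hc2 : cnt n t (Cev n k x t j (T+1)) ≤
        cnt n t (Bev n k x t j T)
          + cnt n t (Dev n k x t j (T+1)) := by
      apply cnt_union_le
      intro ω hω
      by_cases hc : Cev n k x t j T ω
      · exact Or.inl ⟨hω, hc⟩
      · refine Or.inr ⟨hω, fun u hu hCu => hc ?_⟩
        exact Cev_interval hCu hω (by omega) (by omega)
    set a := ∑ s ∈ Finset.range T, cnt n t (Cev n k x t j s) with ha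
    set c1 := cnt n t (Cev n k x t j T) with hc1
    set c2 := cnt n t (Cev n k x t j (T+1)) with hcc2
    set d := cnt n t (Bev n k x t j T) with hd
    set e2 := cnt n t (Dev n k x t j (T+1)) with he2
    set E1 := ∑ s ∈ Finset.range (T+1), cnt n t (Dev n k x t j s) with hE1
    have hsplit : m * c1 + (M - m) * c1 = M * c1 := by
      rw [← Nat.add_mul, Nat.add_sub_cancel' hmM]
    have goal2 : ∑ s ∈ Finset.range (T+1+1), cnt n t (Dev n k x t j s) = E1 + e2 := by
      rw [Finset.sum_range_succ]
    rw [Finset.sum_range_succ, ← ha, ← hc1, goal2]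
    calc m * (a + c1) + M * c2
        = m * a + (m * c1 + M * c2) := by ring
      _ ≤ m * a + (m * c1 + M * (d + e2)) := by
          apply Nat.add_le_add_left
          apply Nat.add_le_add_left
          exact Nat.mul_le_mul_left _ hc2
      _ = m * a + m * c1 + M * d + M * e2 := by ring
      _ ≤ m * a + m * c1 + (M - m) * c1 + M * e2 := by
          apply Nat.add_le_add_right
          exact Nat.add_le_add_left hstep _
      _ = (m * a + M * c1) + M * e2 := by
          rw [Nat.add_assoc (m*a), hsplit]
      _ ≤ M * E1 + M * e2 := Nat.add_le_add_right IH _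
      _ = M * (E1 + e2) := by ring

lemma per_j_count {k : ℕ} {x : Fin n} (hn : 2 ≤ n) {j : ℕ} (hj : j ≤ n) :
    j * (n - j) * (∑ s ∈ Finset.range t, cnt n t (Cev n k x t j s))
      ≤ Fintype.card ((⊤ : SimpleGraph (Fin n)).edgeSet) * cnt n t (Aev n k x t) := by
  have h1 := count_induction (k := k) (x := x) hn hj t (le_refl t)
  have h2 := entries_le (t := t) k x j
  calc j * (n - j) * (∑ s ∈ Finset.range t, cnt n t (Cev n k x t j s))
      ≤ j * (n - j) * (∑ s ∈ Finset.range t, cnt n t (Cev n k x t j s))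
          + Fintype.card ((⊤ : SimpleGraph (Fin n)).edgeSet) * cnt n t (Cev n k x t j t) :=
        Nat.le_add_right _ _
    _ ≤ Fintype.card ((⊤ : SimpleGraph (Fin n)).edgeSet) *
          ∑ s ∈ Finset.range (t+1), cnt n t (Dev n k x t j s) := h1
    _ ≤ Fintype.card ((⊤ : SimpleGraph (Fin n)).edgeSet) * cnt n t (Aev n k x t) :=
        Nat.mul_le_mul_left _ h2
-- part 6: pointwise bound and edge count
lemma val_le {k : ℕ} {x : Fin n}
    (ω : (Fin t → (⊤ : SimpleGraph (Fin n)).edgeSet) × (Fin n → Bool))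
    (hA : Aev n k x t ω) :
    ((if ∀ v : Fin n, knowsAllAt (lw ω) t v then tauAll (lw ω) else t) - Yt (lw ω) x)
      ≤ ∑ j ∈ Finset.Ico k n, ∑ s ∈ Finset.range t,
          (if Cev n k x t j s ω then 1 else 0) := by
  set l := lw ω with hl
  set Y := Yt l x with hYdef
  set b := (if ∀ v : Fin n, knowsAllAt l t v then tauAll l else t) with hb
  have hbt : b ≤ t := by
    rw [hb]
    split
    · exact Nat.sInf_le ‹∀ v : Fin n, knowsAllAt l t v›
    · exact le_refl t
  have hkY : k ≤ Nt l Y := by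
    have h1 : rnk l ω.2 x = k := hA.2
    unfold rnk at h1
    rw [← hYdef] at h1
    omega
  have hgood : ∀ s, Y ≤ s → s < b →
      Cev n k x t (Nt l s) s ω ∧ k ≤ Nt l s ∧ Nt l s < n := by
    intro s h1 h2
    refine ⟨⟨hA, h1, rfl⟩, le_trans hkY (Nt_mono l h1), ?_⟩
    apply Nt_lt_of_not_all
    intro hall
    rw [hb] at h2
    by_cases hco : ∀ v : Fin n, knowsAllAt l t v
    · rw [if_pos hco] at h2
      exact Nat.notMem_of_lt_sInf h2 hall
    · rw [if_neg hco] at h2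
      exact hco (fun v => knowsAllAt_mono l (le_of_lt h2) (hall v))
  calc b - Y = (Finset.Ico Y b).card := (Nat.card_Ico Y b).symm
    _ = ((Finset.range t).filter (fun s => Y ≤ s ∧ s < b)).card := by
        congr 1
        ext s
        simp only [Finset.mem_Ico, Finset.mem_filter, Finset.mem_range]
        omega
    _ = ∑ s ∈ Finset.range t, (if Y ≤ s ∧ s < b then 1 else 0) := Finset.card_filter _ _
    _ ≤ ∑ s ∈ Finset.range t, ∑ j ∈ Finset.Ico k n,
          (if Cev n k x t j s ω then 1 else 0) := by
        apply Finset.sum_le_sum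
        intro s _
        by_cases hgs : Y ≤ s ∧ s < b
        · rw [if_pos hgs]
          obtain ⟨hC, hk1, hk2⟩ := hgood s hgs.1 hgs.2
          calc 1 = (if Cev n k x t (Nt l s) s ω then 1 else 0) := (if_pos hC).symm
            _ ≤ ∑ j ∈ Finset.Ico k n, (if Cev n k x t j s ω then 1 else 0) :=
              Finset.single_le_sum (f := fun j => if Cev n k x t j s ω then 1 else 0)
                (fun i _ => Nat.zero_le _) (Finset.mem_Ico.mpr ⟨hk1, hk2⟩)
        · rw [if_neg hgs]
          exact Nat.zero_le _
    _ = _ := Finset.sum_comm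

lemma cnt_eq_sum (P : (Fin t → (⊤ : SimpleGraph (Fin n)).edgeSet) × (Fin n → Bool) → Prop) :
    cnt n t P = ∑ ω : (Fin t → (⊤ : SimpleGraph (Fin n)).edgeSet) × (Fin n → Bool),
      if P ω then 1 else 0 := Finset.card_filter _ _

lemma card_edge_top (n : ℕ) [inst : Fintype ((⊤ : SimpleGraph (Fin n)).edgeSet)] :
    Fintype.card ((⊤ : SimpleGraph (Fin n)).edgeSet) = n.choose 2 := by
  have h1 : Fintype.card ((⊤ : SimpleGraph (Fin n)).edgeSet)
      = Fintype.card {e : Sym2 (Fin n) // ¬ e.IsDiag} := by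
    apply Fintype.card_congr
    apply Equiv.subtypeEquivRight
    intro e
    rw [SimpleGraph.edgeSet_top]
    rfl
  rw [h1, Sym2.card_subtype_not_diag, Fintype.card_fin]
-- part 7: per-horizon bound
lemma mem_self_confAt {n : ℕ} (l : List (Sym2 (Fin n))) (s : ℕ) (v : Fin n) :
    (v : Fin n) ∈ confAt l s v := by
  have h : ({v} : Set (Fin n)) ⊆ confAt l s v := by
    have := subset_foldl (l.take s) (fun w => {w}) v
    exact this
  exact h rfl

lemma knowsAllAt_one (l : List (Sym2 (Fin 1))) (s : ℕ) (v : Fin 1) :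
    knowsAllAt l s v := by
  unfold knowsAllAt
  apply Set.eq_univ_of_forall
  intro y
  rw [Subsingleton.elim y v]
  exact mem_self_confAt l s v

lemma main_per_t (n k : ℕ) (x : Fin n) (hk : 1 ≤ k) (hkn : k ≤ n) (t : ℕ) :
    rankRemExp n k x t ≤
      (∑ j ∈ Finset.Ico k n, ((n.choose 2 : ℝ≥0∞) / ((j * (n - j) : ℕ) : ℝ≥0∞)))
        * rankProb n k x t := by
  letI instE : Fintype ((⊤ : SimpleGraph (Fin n)).edgeSet) := (Set.toFinite _).fintype
  rcases Nat.lt_or_ge n 2 with hn | hn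
  · -- n = 1
    have hn1 : n = 1 := by omega
    subst hn1
    have hz : rankRemExp 1 k x t = 0 := by
      rw [rankRemExp, unifExp]
      have h0 : (∑ ω : (Fin t → (⊤ : SimpleGraph (Fin 1)).edgeSet) × (Fin 1 → Bool),
          (let l := List.ofFn fun i => ((ω.1 i : Sym2 (Fin 1)))
          if knowsAllAt l t x ∧ rnk l ω.2 x = k then
            (((if ∀ v : Fin 1, knowsAllAt l t v then tauAll l else t) - Yt l x : ℕ) : ℝ≥0∞)
          else 0)) = 0 := by
        apply Finset.sum_eq_zero
        intro ω _
        dsimp only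
        split
        · have hall : ∀ v : Fin 1, knowsAllAt (List.ofFn fun i => ((ω.1 i : Sym2 (Fin 1)))) t v :=
            fun v => knowsAllAt_one _ t v
          rw [if_pos hall]
          have htau : tauAll (List.ofFn fun i => ((ω.1 i : Sym2 (Fin 1)))) = 0 :=
            Nat.le_zero.mp (Nat.sInf_le (fun v => knowsAllAt_one _ 0 v))
          rw [htau]
          simp
        · rfl
      rw [h0, ENNReal.zero_div]
    rw [hz]
    exact zero_le
  · -- main case, n ≥ 2
    set M := Fintype.card ((⊤ : SimpleGraph (Fin n)).edgeSet) with hM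
    set a := cnt n t (Aev n k x t) with haA
    set D := ((Fintype.card ((Fin t → (⊤ : SimpleGraph (Fin n)).edgeSet) × (Fin n → Bool)) : ℕ)
      : ℝ≥0∞) with hD
    have hP : rankProb n k x t = (a : ℝ≥0∞) / D := by
      rw [rankProb, unifProb, haA]
      rfl
    -- numerator bound
    have hsum : (∑ ω : (Fin t → (⊤ : SimpleGraph (Fin n)).edgeSet) × (Fin n → Bool),
        (let l := List.ofFn fun i => ((ω.1 i : Sym2 (Fin n)))
        if knowsAllAt l t x ∧ rnk l ω.2 x = k then
          (((if ∀ v : Fin n, knowsAllAt l t v then tauAll l else t) - Yt l x : ℕ) : ℝ≥0∞)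
        else 0))
        ≤ ((∑ j ∈ Finset.Ico k n, ∑ s ∈ Finset.range t,
            cnt n t (Cev n k x t j s) : ℕ) : ℝ≥0∞) := by
      have h1 : ∀ ω : (Fin t → (⊤ : SimpleGraph (Fin n)).edgeSet) × (Fin n → Bool),
          (let l := List.ofFn fun i => ((ω.1 i : Sym2 (Fin n)))
          if knowsAllAt l t x ∧ rnk l ω.2 x = k then
            (((if ∀ v : Fin n, knowsAllAt l t v then tauAll l else t) - Yt l x : ℕ) : ℝ≥0∞)
          else 0)
          ≤ ((∑ j ∈ Finset.Ico k n, ∑ s ∈ Finset.range t,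
              if Cev n k x t j s ω then 1 else 0 : ℕ) : ℝ≥0∞) := by
        intro ω
        dsimp only
        split
        · next hA =>
            exact Nat.cast_le.mpr (val_le ω hA)
        · exact zero_le
      calc _ ≤ ∑ ω : (Fin t → (⊤ : SimpleGraph (Fin n)).edgeSet) × (Fin n → Bool),
            ((∑ j ∈ Finset.Ico k n, ∑ s ∈ Finset.range t,
              if Cev n k x t j s ω then 1 else 0 : ℕ) : ℝ≥0∞) :=
            Finset.sum_le_sum (fun ω _ => h1 ω)
        _ = _ := by
            rw [← Nat.cast_sum]
            congr 1
            rw [Finset.sum_comm]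
            apply Finset.sum_congr rfl
            intro j _
            rw [Finset.sum_comm]
            apply Finset.sum_congr rfl
            intro s _
            exact (cnt_eq_sum _).symm
    -- per-j division bound
    have hdiv : ∀ j ∈ Finset.Ico k n,
        ((∑ s ∈ Finset.range t, cnt n t (Cev n k x t j s) : ℕ) : ℝ≥0∞)
          ≤ ((M : ℝ≥0∞) * (a : ℝ≥0∞)) / ((j * (n - j) : ℕ) : ℝ≥0∞) := by
      intro j hj
      rw [Finset.mem_Ico] at hj
      have hj1 : 1 ≤ j := le_trans hk hj.1
      have hm0 : ((j * (n - j) : ℕ) : ℝ≥0∞) ≠ 0 := by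
        have : 0 < j * (n - j) := Nat.mul_pos (by omega) (by omega)
        exact_mod_cast Nat.pos_iff_ne_zero.mp this
      rw [ENNReal.le_div_iff_mul_le (Or.inl hm0) (Or.inr (by
        exact ENNReal.mul_ne_top (ENNReal.natCast_ne_top M) (ENNReal.natCast_ne_top a)))]
      have hcount := per_j_count (t := t) (k := k) (x := x) hn (le_of_lt hj.2)
      calc ((∑ s ∈ Finset.range t, cnt n t (Cev n k x t j s) : ℕ) : ℝ≥0∞)
            * ((j * (n - j) : ℕ) : ℝ≥0∞)
          = (((j * (n - j)) * ∑ s ∈ Finset.range t, cnt n t (Cev n k x t j s) : ℕ) : ℝ≥0∞) := by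
            push_cast
            ring
        _ ≤ ((M * a : ℕ) : ℝ≥0∞) := Nat.cast_le.mpr hcount
        _ = (M : ℝ≥0∞) * (a : ℝ≥0∞) := by push_cast; ring
    -- assemble
    rw [rankRemExp, unifExp, hP]
    calc _ ≤ ((∑ j ∈ Finset.Ico k n, ∑ s ∈ Finset.range t,
          cnt n t (Cev n k x t j s) : ℕ) : ℝ≥0∞) / D :=
          ENNReal.div_le_div_right hsum _
      _ ≤ (∑ j ∈ Finset.Ico k n,
            ((M : ℝ≥0∞) * (a : ℝ≥0∞)) / ((j * (n - j) : ℕ) : ℝ≥0∞)) / D := by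
          apply ENNReal.div_le_div_right
          rw [Nat.cast_sum]
          exact Finset.sum_le_sum hdiv
      _ = (∑ j ∈ Finset.Ico k n, ((M : ℝ≥0∞) / ((j * (n - j) : ℕ) : ℝ≥0∞)))
            * ((a : ℝ≥0∞) / D) := by
          rw [div_eq_mul_inv, Finset.sum_mul, Finset.sum_mul]
          apply Finset.sum_congr rfl
          intro j _
          rw [div_eq_mul_inv, div_eq_mul_inv, div_eq_mul_inv]
          ring
      _ = (∑ j ∈ Finset.Ico k n, ((n.choose 2 : ℝ≥0∞) / ((j * (n - j) : ℕ) : ℝ≥0∞)))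
            * ((a : ℝ≥0∞) / D) := by
          congr 1
          apply Finset.sum_congr rfl
          intro j _
          congr 1
          rw [hM, card_edge_top]
-- part 8: harmonic number arithmetic
lemma H_eq_Ico (m : ℕ) : H m = ∑ j ∈ Finset.Ico 1 (m+1), 1/(j:ℝ) := by
  rw [Finset.sum_Ico_eq_sum_range]
  simp only [Nat.add_sub_cancel]
  unfold H
  apply Finset.sum_congr rfl
  intro i _
  push_cast
  ring_nf

lemma sum_inv_Ico (k n : ℕ) (hk : 1 ≤ k) (hkn : k ≤ n) :
    ∑ j ∈ Finset.Ico k n, 1/(j:ℝ) = H (n-1) - H (k-1) := by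
  have h1 : H (n-1) = ∑ j ∈ Finset.Ico 1 n, 1/(j:ℝ) := by
    rw [H_eq_Ico, show n - 1 + 1 = n by omega]
  have h2 : H (k-1) = ∑ j ∈ Finset.Ico 1 k, 1/(j:ℝ) := by
    rw [H_eq_Ico, show k - 1 + 1 = k by omega]
  have h3 := Finset.sum_Ico_consecutive (fun j : ℕ => 1/(j:ℝ)) hk hkn
  rw [h1, h2]
  linarith

lemma sum_inv_rev_Ico (k n : ℕ) (hk : 1 ≤ k) (hkn : k ≤ n) :
    ∑ j ∈ Finset.Ico k n, 1/(((n-j : ℕ)):ℝ) = H (n-k) := by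
  rw [Finset.sum_Ico_eq_sum_range]
  have hrefl := Finset.sum_range_reflect (fun i : ℕ => 1/((i+1 : ℕ):ℝ)) (n-k)
  have hH : H (n-k) = ∑ i ∈ Finset.range (n-k), 1/((i+1 : ℕ):ℝ) := by
    unfold H
    apply Finset.sum_congr rfl
    intro i _
    push_cast
    ring_nf
  rw [hH, ← hrefl]
  apply Finset.sum_congr rfl
  intro i hi
  rw [Finset.mem_range] at hi
  congr 2
  omega

lemma Khelper (n k : ℕ) (hk : 1 ≤ k) (hkn : k ≤ n) :
    (∑ j ∈ Finset.Ico k n, ((n.choose 2 : ℝ≥0∞) / ((j * (n - j) : ℕ) : ℝ≥0∞)))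
      ≤ ENNReal.ofReal (((n : ℝ) - 1) / 2 * (H (n - 1) - H (k - 1) + H (n - k))) := by
  have step1 : ∀ j ∈ Finset.Ico k n,
      (n.choose 2 : ℝ≥0∞) / ((j * (n - j) : ℕ) : ℝ≥0∞)
        = ENNReal.ofReal ((n.choose 2 : ℝ) / ((j * (n - j) : ℕ) : ℝ)) := by
    intro j hj
    rw [Finset.mem_Ico] at hj
    have hpos : (0:ℝ) < ((j * (n - j) : ℕ) : ℝ) := by
      have : 0 < j * (n - j) := Nat.mul_pos (by omega) (by omega)
      exact_mod_cast this
    rw [ENNReal.ofReal_div_of_pos hpos, ENNReal.ofReal_natCast, ENNReal.ofReal_natCast]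
  rw [Finset.sum_congr rfl step1, ← ENNReal.ofReal_sum_of_nonneg
    (fun j _ => by positivity)]
  apply ENNReal.ofReal_le_ofReal
  have hterm : ∀ j ∈ Finset.Ico k n,
      (n.choose 2 : ℝ) / ((j * (n - j) : ℕ) : ℝ)
        = ((n : ℝ) - 1) / 2 * (1/(j:ℝ) + 1/(((n-j : ℕ)):ℝ)) := by
    intro j hj
    rw [Finset.mem_Ico] at hj
    have hj1 : 1 ≤ j := le_trans hk hj.1
    have hc : ((n - j : ℕ) : ℝ) = (n : ℝ) - (j : ℝ) := by
      rw [Nat.cast_sub (le_of_lt hj.2)]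
    have hjpos : (0:ℝ) < (j:ℝ) := by exact_mod_cast hj1
    have hcpos : (0:ℝ) < ((n - j : ℕ) : ℝ) := by
      have : 0 < n - j := by omega
      exact_mod_cast this
    rw [Nat.cast_mul, Nat.cast_choose_two, hc]
    rw [hc] at hcpos
    field_simp
    ring
  rw [Finset.sum_congr rfl hterm, ← Finset.mul_sum, Finset.sum_add_distrib,
    sum_inv_Ico k n hk hkn, sum_inv_rev_Ico k n hk hkn]

/-- The conditional expectation `E[S_x ∣ σ(x) = k]`, obtained by monotone convergence as the
ratio of the suprema over horizons of `E[S_x·1{σ(x)=k}]` and `P[σ(x)=k]`. -/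
theorem conditional_remaining_time_bound (n k : ℕ) (x : Fin n) (hk : 1 ≤ k) (hkn : k ≤ n) :
    (⨆ t : ℕ, rankRemExp n k x t) / (⨆ t : ℕ, rankProb n k x t)
      ≤ ENNReal.ofReal (((n : ℝ) - 1) / 2 * (H (n - 1) - H (k - 1) + H (n - k))) := by
  have hmain : (⨆ t : ℕ, rankRemExp n k x t) ≤
      (∑ j ∈ Finset.Ico k n, ((n.choose 2 : ℝ≥0∞) / ((j * (n - j) : ℕ) : ℝ≥0∞)))
        * ⨆ t : ℕ, rankProb n k x t := by
    apply iSup_le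
    intro t
    exact le_trans (main_per_t n k x hk hkn t)
      (mul_le_mul_right (le_iSup (fun t => rankProb n k x t) t) _)
  apply ENNReal.div_le_of_le_mul
  exact le_trans hmain (mul_le_mul_left (Khelper n k hk hkn) _)
end

section
/- Summing the inequality n(n-1)/k ≤ (2n-1)[M_n(k) − M_n(k-1)] − b_k + b_{k-1} (where b_k = k[M_n(k) − M_n(k-1)]) for k from 3 to n-1 yields n(n-1)(H(n-1) − 3/2) ≤ 2n[M_n(n) − M_n(1)]. -/
open scoped ENNReal Classical

theorem summing_recursion_inequality (n : ℕ) (hn : 4 ≤ n) (M : ℕ → ℝ)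
    (hmono : ∀ k l : ℕ, k ≤ l → M k ≤ M l)
    (hineq : ∀ k : ℕ, 3 ≤ k → k ≤ n - 1 →
      (n * (n - 1) : ℝ) / k ≤
        (2 * n - 1) * (M k - M (k - 1)) - k * (M k - M (k - 1))
          + (k - 1) * (M (k - 1) - M (k - 2))) :
    (n * (n - 1) : ℝ) * (H (n - 1) - 3 / 2) ≤ 2 * n * (M n - M 1) := by
  set m := n - 1 with hm
  have hm2 : 2 ≤ m := by omega
  have hmn : m + 1 = n := by omega
  have tele : ∀ p : ℕ, 2 ≤ p →
      ∑ k ∈ Finset.Icc 3 p, ((2 * (n : ℝ) - 1) * (M k - M (k - 1))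
          - (k : ℝ) * (M k - M (k - 1)) + ((k : ℝ) - 1) * (M (k - 1) - M (k - 2)))
        = (2 * (n : ℝ) - 1) * (M p - M 2) - (p : ℝ) * (M p - M (p - 1))
          + 2 * (M 2 - M 1) := by
    intro p hp
    induction p with
    | zero => omega
    | succ q ih =>
      rcases Nat.lt_or_ge q 2 with h | h
      · interval_cases q
        · omega
        · norm_num [show Finset.Icc 3 2 = ∅ from rfl]
      · rw [Finset.sum_Icc_succ_top (by omega), ih h]
        have h1 : q + 1 - 1 = q := rfl
        have h2 : q + 1 - 2 = q - 1 := rfl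
        rw [h1, h2]
        push_cast
        ring
  have harm : ∀ p : ℕ, 2 ≤ p → H p = 3 / 2 + ∑ k ∈ Finset.Icc 3 p, (1 : ℝ) / k := by
    intro p hp
    induction p with
    | zero => omega
    | succ q ih =>
      rcases Nat.lt_or_ge q 2 with h | h
      · interval_cases q
        · omega
        · norm_num [show Finset.Icc 3 2 = ∅ from rfl, H, Finset.sum_range_succ]
      · rw [Finset.sum_Icc_succ_top (by omega)]
        have hH : H (q + 1) = H q + 1 / ((q : ℝ) + 1) := by
          simp [H, Finset.sum_range_succ]
        rw [hH, ih h]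
        push_cast
        ring
  have key : (n * (n - 1) : ℝ) * (H m - 3 / 2)
      ≤ (2 * (n : ℝ) - 1) * (M m - M 2) - (m : ℝ) * (M m - M (m - 1))
        + 2 * (M 2 - M 1) := by
    rw [← tele m hm2]
    have : (n * (n - 1) : ℝ) * (H m - 3 / 2)
        = ∑ k ∈ Finset.Icc 3 m, (n * (n - 1) : ℝ) / k := by
      rw [harm m hm2, add_sub_cancel_left, Finset.mul_sum]
      exact Finset.sum_congr rfl fun k hk => by ring
    rw [this]
    apply Finset.sum_le_sum
    intro k hk
    simp only [Finset.mem_Icc] at hk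
    exact hineq k hk.1 hk.2
  have h1 : M 1 ≤ M 2 := hmono 1 2 (by omega)
  have h2 : M 2 ≤ M m := hmono 2 m hm2
  have h3 : M m ≤ M n := hmono m n (by omega)
  have h4 : M (m - 1) ≤ M m := hmono (m - 1) m (by omega)
  have hn' : (4 : ℝ) ≤ (n : ℝ) := by exact_mod_cast hn
  have hmr : (3 : ℝ) ≤ (m : ℝ) := by
    have : 3 ≤ m := by omega
    exact_mod_cast this
  have hH' : H (n - 1) = H m := by rw [hm]
  rw [hH']
  nlinarith [key, mul_nonneg (by linarith : (0:ℝ) ≤ (m:ℝ)) (by linarith : (0:ℝ) ≤ M m - M (m-1))]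
end
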